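/- arXiv:0810.0184 — 2 statements merged into one kernel-verified Lean document; each statement's English description precedes it below -/
import Mathlib

section
/- Periodicity Lemma for Clifford–Weyl algebras: for all m, n, k ∈ ℕ there is an isomorphism of ℂ-algebras C(2m+n, 2k) ≅ C(2m) ⊗[ℂ] C(n, 2k), where ⊗[ℂ] is the (ungraded) tensor product of ℂ-algebras. -/
open scoped TensorProduct

section Helpers

variable {A : Type*} [Ring A] [Algebra ℂ A]

/-- If `y` commutes with each `x i` up to a scalar `s i`, it commutes with the
product up to `∏ s i`. -/
lemma smul_comm_listProd : ∀ {r : ℕ} (x : Fin r → A) (y : A) (s : Fin r → ℂ),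
    (∀ i, y * x i = s i • (x i * y)) →
    y * (List.ofFn x).prod = (∏ i, s i) • ((List.ofFn x).prod * y)
  | 0, x, y, s, _ => by simp
  | (r+1), x, y, s, h => by
    have ih := smul_comm_listProd (fun i => x i.succ) y (fun i => s i.succ)
      (fun i => h i.succ)
    rw [List.ofFn_succ, List.prod_cons, ← mul_assoc, h 0, smul_mul_assoc, mul_assoc, ih,
      Fin.prod_univ_succ, mul_smul, mul_smul_comm, mul_assoc]

lemma anticomm_listProd {r : ℕ} (x : Fin r → A) (y : A)
    (h : ∀ i, y * x i = -(x i * y)) :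
    y * (List.ofFn x).prod = ((-1 : ℂ) ^ r) • ((List.ofFn x).prod * y) := by
  have := smul_comm_listProd x y (fun _ => (-1 : ℂ))
    (fun i => by rw [h i, neg_smul, one_smul])
  simpa using this

/-- Triangular numbers. -/
def tri : ℕ → ℕ
  | 0 => 0
  | (r+1) => tri r + r

lemma listProd_sq : ∀ {r : ℕ} (x : Fin r → A),
    (∀ i, x i * x i = 1) → (∀ i j, i ≠ j → x i * x j = -(x j * x i)) →
    (List.ofFn x).prod * (List.ofFn x).prod = ((-1 : ℂ) ^ tri r) • 1
  | 0, x, _, _ => by simp [tri]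
  | (r+1), x, hsq, hac => by
    set ρ := (List.ofFn fun i => x i.succ).prod with hρdef
    have ih := listProd_sq (fun i => x i.succ) (fun i => hsq i.succ)
      (fun i j hij => hac i.succ j.succ (by simpa using hij))
    have h1 : x 0 * ρ = ((-1 : ℂ) ^ r) • (ρ * x 0) :=
      anticomm_listProd _ (x 0) (fun i => hac 0 i.succ (Fin.succ_ne_zero i).symm)
    have h2 : ρ * x 0 = ((-1 : ℂ) ^ r) • (x 0 * ρ) := by
      rw [h1, smul_smul, ← pow_add]
      rw [Even.neg_one_pow ⟨r, by ring⟩, one_smul]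
    rw [List.ofFn_succ, List.prod_cons, ← hρdef]
    calc (x 0 * ρ) * (x 0 * ρ) = x 0 * (ρ * x 0) * ρ := by
          simp only [mul_assoc]
      _ = ((-1 : ℂ) ^ r) • (x 0 * x 0 * (ρ * ρ)) := by
          rw [h2, mul_smul_comm, smul_mul_assoc]
          simp only [mul_assoc]
      _ = ((-1 : ℂ) ^ tri (r+1)) • 1 := by
          rw [hsq 0, one_mul, ih, smul_smul, ← pow_add, tri, add_comm (tri r) r]

lemma tri_two_mul_parity (m : ℕ) : (tri (2 * m) + m) % 2 = 0 := by
  induction m with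
  | zero => simp [tri]
  | succ m ih =>
    have h : 2 * (m + 1) = (2 * m + 1) + 1 := by ring
    rw [h, tri, tri]
    omega

/-- The chirality element associated to a family of `2m` square-one pairwise
anticommuting elements. -/
noncomputable def chi {m : ℕ} (x : Fin (2 * m) → A) : A :=
  (Complex.I ^ m) • (List.ofFn x).prod

lemma chi_mul_self {m : ℕ} (x : Fin (2 * m) → A)
    (hsq : ∀ i, x i * x i = 1) (hac : ∀ i j, i ≠ j → x i * x j = -(x j * x i)) :
    chi x * chi x = 1 := by
  rw [chi, smul_mul_smul_comm, listProd_sq x hsq hac, smul_smul]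
  have : Complex.I ^ m * Complex.I ^ m * (-1 : ℂ) ^ tri (2 * m) = 1 := by
    rw [← mul_pow, Complex.I_mul_I, ← pow_add]
    have hpar := tri_two_mul_parity m
    rw [(Nat.even_iff.mpr (by omega) : Even (m + tri (2 * m))).neg_one_pow]
  rw [this, one_smul]

lemma mul_chi_of_anticomm {m : ℕ} (x : Fin (2 * m) → A) (y : A)
    (h : ∀ i, y * x i = -(x i * y)) : y * chi x = chi x * y := by
  rw [chi, mul_smul_comm, smul_mul_assoc]
  rw [anticomm_listProd x y h, Even.neg_one_pow ⟨m, by ring⟩, one_smul]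

lemma mul_chi_self_anticomm {m : ℕ} (x : Fin (2 * m) → A) (i : Fin (2 * m))
    (hsq : ∀ i, x i * x i = 1) (hac : ∀ i j, i ≠ j → x i * x j = -(x j * x i))
    (hm : 1 ≤ m) :
    x i * chi x = -(chi x * x i) := by
  have key := smul_comm_listProd x (x i) (fun j => if j = i then 1 else -1) ?_
  · have hprod : (∏ j, (if j = i then (1:ℂ) else -1)) = -1 := by
      rw [← Finset.prod_erase_mul _ _ (Finset.mem_univ i), if_pos rfl, mul_one]
      rw [Finset.prod_congr rfl (fun j hj => if_neg (Finset.ne_of_mem_erase hj)),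
        Finset.prod_const, Finset.card_erase_of_mem (Finset.mem_univ i),
        Finset.card_univ, Fintype.card_fin]
      exact Odd.neg_one_pow ⟨m - 1, by omega⟩
    rw [chi, mul_smul_comm, smul_mul_assoc, key, hprod, neg_one_smul, smul_neg]
  · intro j
    rcases eq_or_ne j i with rfl | hji
    · rw [if_pos rfl, one_smul]
    · rw [if_neg hji, hac i j (Ne.symm hji), neg_smul, one_smul]

/-- Squares of sums of scaled Clifford-type generators. -/
lemma sum_smul_sq {r : ℕ} (x : Fin r → A)
    (h : ∀ i j, x i * x j + x j * x i = if i = j then 2 else 0) (v : Fin r → ℂ) :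
    (∑ i, v i • x i) * (∑ i, v i • x i) = algebraMap ℂ A (∑ i, v i * v i) := by
  have expand : (∑ i, v i • x i) * (∑ i, v i • x i)
      = ∑ i, ∑ j, (v i * v j) • (x i * x j) := by
    rw [Finset.sum_mul_sum]
    exact Finset.sum_congr rfl fun i _ => Finset.sum_congr rfl fun j _ =>
      smul_mul_smul_comm (v i) (x i) (v j) (x j)
  have expand' : (∑ i, v i • x i) * (∑ i, v i • x i)
      = ∑ i, ∑ j, (v i * v j) • (x j * x i) := by
    rw [expand, Finset.sum_comm]
    exact Finset.sum_congr rfl fun i _ => Finset.sum_congr rfl fun j _ => by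
      rw [mul_comm (v j) (v i)]
  have inner : ∀ i : Fin r, ((∑ j, (v i * v j) • (x i * x j)) + ∑ j, (v i * v j) • (x j * x i))
      = (2:ℂ) • ((v i * v i) • (1 : A)) := by
    intro i
    rw [← Finset.sum_add_distrib]
    have step : ∀ j : Fin r, ((v i * v j) • (x i * x j) + (v i * v j) • (x j * x i))
        = if i = j then (v i * v j) • (2:A) else 0 := by
      intro j
      rw [← smul_add, h i j, smul_ite, smul_zero]
    rw [Finset.sum_congr rfl fun j _ => step j,
      Finset.sum_ite_eq Finset.univ i (fun j => (v i * v j) • (2 : A)),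
      if_pos (Finset.mem_univ i)]
    rw [show (2:A) = (2:ℂ) • (1:A) from by rw [two_smul, one_add_one_eq_two]]
    rw [smul_comm]
  have key : (2 : ℂ) • ((∑ i, v i • x i) * (∑ i, v i • x i))
      = (2 : ℂ) • algebraMap ℂ A (∑ i, v i * v i) := by
    rw [two_smul]
    nth_rewrite 1 [expand]
    nth_rewrite 1 [expand']
    rw [← Finset.sum_add_distrib, Finset.sum_congr rfl fun i _ => inner i,
      ← Finset.smul_sum, map_sum]
    congr 1
    exact Finset.sum_congr rfl fun i _ => (Algebra.algebraMap_eq_smul_one _).symm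
  exact smul_right_injective A two_ne_zero key

end Helpers

/-- The quadratic form `Q_r` on `Fin r → ℂ` given by `Q_r v = ∑ i, (v i)^2`. -/
noncomputable def Qf (r : ℕ) : QuadraticForm ℂ (Fin r → ℂ) :=
  QuadraticMap.weightedSumSquares ℂ (fun _ : Fin r => (1 : ℂ))

/-- The complex Clifford algebra `C(r)`. -/
noncomputable abbrev CliffordC (r : ℕ) := CliffordAlgebra (Qf r)

section Cliff

variable {r : ℕ}

lemma Qf_apply (v : Fin r → ℂ) : Qf r v = ∑ i, v i * v i := by
  simp [Qf]

/-- The standard generators of the Clifford algebra. -/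
noncomputable def eC (i : Fin r) : CliffordC r :=
  CliffordAlgebra.ι (Qf r) (Pi.single i 1)

lemma eC_sq (i : Fin r) : eC i * eC i = 1 := by
  rw [eC, CliffordAlgebra.ι_sq_scalar, Qf_apply]
  have hterm : ∀ j, (Pi.single i 1 : Fin r → ℂ) j * (Pi.single i 1 : Fin r → ℂ) j = if j = i then 1 else 0 := by
    intro j
    rcases eq_or_ne j i with rfl | h
    · simp [Pi.single_apply]
    · simp [Pi.single_apply, h]
  rw [Finset.sum_congr rfl fun j _ => hterm j,
    Finset.sum_ite_eq' Finset.univ i (fun _ => (1:ℂ)), if_pos (Finset.mem_univ i), map_one]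

lemma eC_anticomm {i j : Fin r} (hij : i ≠ j) : eC i * eC j = -(eC j * eC i) := by
  have h := CliffordAlgebra.ι_mul_ι_add_swap (Q := Qf r) (Pi.single i 1) (Pi.single j 1)
  have hpolar : QuadraticMap.polar (Qf r) (Pi.single i 1) (Pi.single j 1) = 0 := by
    rw [QuadraticMap.polar, Qf_apply, Qf_apply, Qf_apply]
    rw [← Finset.sum_sub_distrib, ← Finset.sum_sub_distrib]
    refine Finset.sum_eq_zero fun l _ => ?_
    simp only [Pi.add_apply, Pi.single_apply]
    split_ifs with h1 h2 h2
    · exact absurd (h1 ▸ h2 : i = j) hij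
    · ring
    · ring
    · ring
  rw [hpolar, map_zero] at h
  rw [eC, eC]
  linear_combination (norm := noncomm_ring) h

/-- The chirality element of `CliffordC (2 * m)`. -/
noncomputable def gammaC (m : ℕ) : CliffordC (2 * m) := chi eC

lemma gammaC_sq (m : ℕ) : gammaC m * gammaC m = 1 :=
  chi_mul_self eC eC_sq (fun _ _ h => eC_anticomm h)

lemma eC_mul_gammaC {m : ℕ} (i : Fin (2 * m)) :
    eC i * gammaC m = -(gammaC m * eC i) :=
  mul_chi_self_anticomm eC i eC_sq (fun _ _ h => eC_anticomm h) (by have := i.pos; omega)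

end Cliff

/-- Generators of the Clifford–Weyl algebra `C(n, 2k)`:
`n` Fermi-type generators `ω_i` and `2k` Bose-type generators `p_i, q_i`. -/
inductive CWGen (n k : ℕ) : Type
  | w : Fin n → CWGen n k
  | p : Fin k → CWGen n k
  | q : Fin k → CWGen n k

/-- The defining relations of the Clifford–Weyl algebra `C(n, 2k)`:
`ω_i ω_j + ω_j ω_i = 2δ_{ij}`, `p_i q_j − q_j p_i = δ_{ij}`, `p_i p_j = p_j p_i`,
`q_i q_j = q_j q_i`, `ω_i p_j = −p_j ω_i`, `ω_i q_j = −q_j ω_i`. -/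
inductive CWRel (n k : ℕ) :
    FreeAlgebra ℂ (CWGen n k) → FreeAlgebra ℂ (CWGen n k) → Prop
  | ww (i j : Fin n) : CWRel n k
      (FreeAlgebra.ι ℂ (CWGen.w i) * FreeAlgebra.ι ℂ (CWGen.w j) +
        FreeAlgebra.ι ℂ (CWGen.w j) * FreeAlgebra.ι ℂ (CWGen.w i))
      (if i = j then 2 else 0)
  | pq (i j : Fin k) : CWRel n k
      (FreeAlgebra.ι ℂ (CWGen.p i) * FreeAlgebra.ι ℂ (CWGen.q j) -
        FreeAlgebra.ι ℂ (CWGen.q j) * FreeAlgebra.ι ℂ (CWGen.p i))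
      (if i = j then 1 else 0)
  | pp (i j : Fin k) : CWRel n k
      (FreeAlgebra.ι ℂ (CWGen.p i) * FreeAlgebra.ι ℂ (CWGen.p j))
      (FreeAlgebra.ι ℂ (CWGen.p j) * FreeAlgebra.ι ℂ (CWGen.p i))
  | qq (i j : Fin k) : CWRel n k
      (FreeAlgebra.ι ℂ (CWGen.q i) * FreeAlgebra.ι ℂ (CWGen.q j))
      (FreeAlgebra.ι ℂ (CWGen.q j) * FreeAlgebra.ι ℂ (CWGen.q i))
  | wp (i : Fin n) (j : Fin k) : CWRel n k
      (FreeAlgebra.ι ℂ (CWGen.w i) * FreeAlgebra.ι ℂ (CWGen.p j))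
      (-(FreeAlgebra.ι ℂ (CWGen.p j) * FreeAlgebra.ι ℂ (CWGen.w i)))
  | wq (i : Fin n) (j : Fin k) : CWRel n k
      (FreeAlgebra.ι ℂ (CWGen.w i) * FreeAlgebra.ι ℂ (CWGen.q j))
      (-(FreeAlgebra.ι ℂ (CWGen.q j) * FreeAlgebra.ι ℂ (CWGen.w i)))

/-- The Clifford–Weyl algebra `C(n, 2k)`, presented by generators and relations. -/
abbrev CliffordWeyl (n k : ℕ) : Type := RingQuot (CWRel n k)

namespace CliffordWeyl

variable {n k : ℕ}

/-- The generator `ω_i` of the Clifford–Weyl algebra. -/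
def W (i : Fin n) : CliffordWeyl n k :=
  RingQuot.mkAlgHom ℂ (CWRel n k) (FreeAlgebra.ι ℂ (CWGen.w i))

/-- The generator `p_i` of the Clifford–Weyl algebra. -/
def P (i : Fin k) : CliffordWeyl n k :=
  RingQuot.mkAlgHom ℂ (CWRel n k) (FreeAlgebra.ι ℂ (CWGen.p i))

/-- The generator `q_i` of the Clifford–Weyl algebra. -/
def Qg (i : Fin k) : CliffordWeyl n k :=
  RingQuot.mkAlgHom ℂ (CWRel n k) (FreeAlgebra.ι ℂ (CWGen.q i))

lemma rel_ww (i j : Fin n) :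
    W i * W j + W j * W i = (if i = j then (2 : CliffordWeyl n k) else 0) := by
  have h := RingQuot.mkAlgHom_rel ℂ (CWRel.ww (n := n) (k := k) i j)
  simpa [W, map_add, map_mul, map_ofNat, apply_ite (RingQuot.mkAlgHom ℂ (CWRel n k))] using h

lemma rel_pq (i j : Fin k) :
    P i * Qg j - Qg j * P i = (if i = j then (1 : CliffordWeyl n k) else 0) := by
  have h := RingQuot.mkAlgHom_rel ℂ (CWRel.pq (n := n) (k := k) i j)
  simpa [P, Qg, map_sub, map_mul, apply_ite (RingQuot.mkAlgHom ℂ (CWRel n k))] using h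

lemma rel_pp (i j : Fin k) : (P i * P j : CliffordWeyl n k) = P j * P i := by
  have h := RingQuot.mkAlgHom_rel ℂ (CWRel.pp (n := n) (k := k) i j)
  simpa [P, map_mul] using h

lemma rel_qq (i j : Fin k) : (Qg i * Qg j : CliffordWeyl n k) = Qg j * Qg i := by
  have h := RingQuot.mkAlgHom_rel ℂ (CWRel.qq (n := n) (k := k) i j)
  simpa [Qg, map_mul] using h

lemma rel_wp (i : Fin n) (j : Fin k) :
    (W i * P j : CliffordWeyl n k) = -(P j * W i) := by
  have h := RingQuot.mkAlgHom_rel ℂ (CWRel.wp (n := n) (k := k) i j)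
  simpa [W, P, map_mul, map_neg] using h

lemma rel_wq (i : Fin n) (j : Fin k) :
    (W i * Qg j : CliffordWeyl n k) = -(Qg j * W i) := by
  have h := RingQuot.mkAlgHom_rel ℂ (CWRel.wq (n := n) (k := k) i j)
  simpa [W, Qg, map_mul, map_neg] using h

lemma W_sq (i : Fin n) : (W i * W i : CliffordWeyl n k) = 1 := by
  have h := rel_ww (n := n) (k := k) i i
  rw [if_pos rfl] at h
  have h2 : (2:ℂ) • (W i * W i : CliffordWeyl n k) = (2:ℂ) • (1 : CliffordWeyl n k) := by
    rw [two_smul, h]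
    rw [show ((2:ℂ) • (1 : CliffordWeyl n k)) = 2 from by rw [two_smul, one_add_one_eq_two]]
  exact smul_right_injective _ two_ne_zero h2

lemma W_anticomm {i j : Fin n} (hij : i ≠ j) :
    (W i * W j : CliffordWeyl n k) = -(W j * W i) := by
  have h := rel_ww (n := n) (k := k) i j
  rw [if_neg hij] at h
  linear_combination (norm := noncomm_ring) h
end CliffordWeyl

section Main

open CliffordWeyl Algebra.TensorProduct

variable {m n k : ℕ}

lemma castAdd_ne_natAdd (a : Fin (2 * m)) (b : Fin n) :
    Fin.castAdd n a ≠ Fin.natAdd (2 * m) b := by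
  simp only [Fin.ne_iff_vne, Fin.coe_castAdd, Fin.coe_natAdd]
  have := a.isLt
  omega

lemma commute_of_double_anticomm {A : Type*} [Ring A] (x g y : A)
    (h1 : x * g = -(g * x)) (h2 : x * y = -(y * x)) : Commute x (g * y) := by
  show x * (g * y) = (g * y) * x
  calc x * (g * y) = (x * g) * y := (mul_assoc _ _ _).symm
    _ = -(g * (x * y)) := by rw [h1, neg_mul, mul_assoc]
    _ = g * (y * x) := by rw [h2, mul_neg, neg_neg]
    _ = (g * y) * x := (mul_assoc _ _ _).symm

/-- Helper: `∑ i, (Pi.single a 1) i • y i = y a`. -/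
lemma sum_single_smul {A : Type*} [AddCommMonoid A] [Module ℂ A] {r : ℕ}
    (y : Fin r → A) (a : Fin r) :
    ∑ i, (Pi.single a 1 : Fin r → ℂ) i • y i = y a := by
  have hterm : ∀ i, (Pi.single a 1 : Fin r → ℂ) i • y i = if i = a then y i else 0 := by
    intro i
    rw [Pi.single_apply, ite_smul, one_smul, zero_smul]
  rw [Finset.sum_congr rfl fun i _ => hterm i,
    Finset.sum_ite_eq' Finset.univ a y, if_pos (Finset.mem_univ a)]

/-! ### The forward map -/

/-- Images of the generators under the forward map. -/
noncomputable def gF (m n k : ℕ) :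
    CWGen (2 * m + n) k → (CliffordC (2 * m) ⊗[ℂ] CliffordWeyl n k)
  | CWGen.w i => Fin.addCases
      (fun a : Fin (2 * m) => eC a ⊗ₜ (1 : CliffordWeyl n k))
      (fun j : Fin n => gammaC m ⊗ₜ (W j : CliffordWeyl n k)) i
  | CWGen.p j => gammaC m ⊗ₜ (P j : CliffordWeyl n k)
  | CWGen.q j => gammaC m ⊗ₜ (Qg j : CliffordWeyl n k)

/-- The forward map on the free algebra. -/
noncomputable def FA (m n k : ℕ) :
    FreeAlgebra ℂ (CWGen (2 * m + n) k) →ₐ[ℂ] (CliffordC (2 * m) ⊗[ℂ] CliffordWeyl n k) :=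
  FreeAlgebra.lift ℂ (gF m n k)

lemma FA_rel : ∀ ⦃x y⦄, CWRel (2 * m + n) k x y → FA m n k x = FA m n k y := by
  intro x y h
  induction h with
  | ww i j =>
    simp only [FA, map_add, map_mul, FreeAlgebra.lift_ι_apply, gF]
    induction i using Fin.addCases with
    | left a =>
      induction j using Fin.addCases with
      | left b =>
        simp only [Fin.addCases_left, Algebra.TensorProduct.tmul_mul_tmul, one_mul]
        rcases eq_or_ne a b with rfl | hab
        · rw [if_pos rfl, map_ofNat, eC_sq]
          rw [← Algebra.TensorProduct.one_def, one_add_one_eq_two]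
        · rw [if_neg (by simpa [Fin.ext_iff] using (Fin.val_ne_of_ne hab)), map_zero]
          rw [← TensorProduct.add_tmul, eC_anticomm hab, neg_add_cancel,
            TensorProduct.zero_tmul]
      | right b =>
        simp only [Fin.addCases_left, Fin.addCases_right,
          Algebra.TensorProduct.tmul_mul_tmul, one_mul, mul_one]
        rw [if_neg (castAdd_ne_natAdd a b), map_zero]
        rw [← TensorProduct.add_tmul, eC_mul_gammaC, neg_add_cancel, TensorProduct.zero_tmul]
    | right a =>
      induction j using Fin.addCases with
      | left b =>
        simp only [Fin.addCases_left, Fin.addCases_right,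
          Algebra.TensorProduct.tmul_mul_tmul, one_mul, mul_one]
        rw [if_neg (Ne.symm (castAdd_ne_natAdd b a)), map_zero]
        rw [← TensorProduct.add_tmul, eC_mul_gammaC, add_comm, neg_add_cancel,
          TensorProduct.zero_tmul]
      | right b =>
        simp only [Fin.addCases_right, Algebra.TensorProduct.tmul_mul_tmul, gammaC_sq]
        rw [← TensorProduct.tmul_add, rel_ww]
        rcases eq_or_ne a b with rfl | hab
        · rw [if_pos rfl, if_pos rfl, map_ofNat,
            show (2:CliffordWeyl n k) = 1 + 1 from one_add_one_eq_two.symm,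
            TensorProduct.tmul_add, ← Algebra.TensorProduct.one_def, one_add_one_eq_two]
        · rw [if_neg hab, if_neg (by simpa [Fin.ext_iff] using (Fin.val_ne_of_ne hab)),
            map_zero, TensorProduct.tmul_zero]
  | pq i j =>
    simp only [FA, map_sub, map_mul, FreeAlgebra.lift_ι_apply, gF,
      Algebra.TensorProduct.tmul_mul_tmul, gammaC_sq]
    rw [← TensorProduct.tmul_sub, rel_pq]
    rcases eq_or_ne i j with rfl | hij
    · rw [if_pos rfl, if_pos rfl, map_one, Algebra.TensorProduct.one_def]
    · rw [if_neg hij, if_neg hij, map_zero, TensorProduct.tmul_zero]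
  | pp i j =>
    simp only [FA, map_mul, FreeAlgebra.lift_ι_apply, gF,
      Algebra.TensorProduct.tmul_mul_tmul, gammaC_sq, rel_pp]
  | qq i j =>
    simp only [FA, map_mul, FreeAlgebra.lift_ι_apply, gF,
      Algebra.TensorProduct.tmul_mul_tmul, gammaC_sq, rel_qq]
  | wp i j =>
    simp only [FA, map_mul, map_neg, FreeAlgebra.lift_ι_apply, gF]
    induction i using Fin.addCases with
    | left a =>
      simp only [Fin.addCases_left, Algebra.TensorProduct.tmul_mul_tmul, one_mul, mul_one]
      rw [eC_mul_gammaC, TensorProduct.neg_tmul]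
    | right a =>
      simp only [Fin.addCases_right, Algebra.TensorProduct.tmul_mul_tmul, gammaC_sq]
      rw [rel_wp, TensorProduct.tmul_neg]
  | wq i j =>
    simp only [FA, map_mul, map_neg, FreeAlgebra.lift_ι_apply, gF]
    induction i using Fin.addCases with
    | left a =>
      simp only [Fin.addCases_left, Algebra.TensorProduct.tmul_mul_tmul, one_mul, mul_one]
      rw [eC_mul_gammaC, TensorProduct.neg_tmul]
    | right a =>
      simp only [Fin.addCases_right, Algebra.TensorProduct.tmul_mul_tmul, gammaC_sq]
      rw [rel_wq, TensorProduct.tmul_neg]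

/-- The forward algebra homomorphism. -/
noncomputable def Fmap (m n k : ℕ) :
    CliffordWeyl (2 * m + n) k →ₐ[ℂ] (CliffordC (2 * m) ⊗[ℂ] CliffordWeyl n k) :=
  RingQuot.liftAlgHom ℂ ⟨FA m n k, FA_rel⟩

end Main

section Back

open CliffordWeyl

variable {m n k : ℕ}

/-- The first `2m` Fermi generators of the big Clifford–Weyl algebra. -/
def XB (m n k : ℕ) (a : Fin (2 * m)) : CliffordWeyl (2 * m + n) k :=
  W (Fin.castAdd n a)

lemma XB_sq (a : Fin (2 * m)) : XB m n k a * XB m n k a = 1 := W_sq _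

lemma XB_anticomm {a b : Fin (2 * m)} (hab : a ≠ b) :
    XB m n k a * XB m n k b = -(XB m n k b * XB m n k a) :=
  W_anticomm (by simpa [Fin.ext_iff] using Fin.val_ne_of_ne hab)

lemma XB_rel (a b : Fin (2 * m)) :
    XB m n k a * XB m n k b + XB m n k b * XB m n k a = if a = b then 2 else 0 := by
  rcases eq_or_ne a b with rfl | hab
  · rw [if_pos rfl, XB_sq, one_add_one_eq_two]
  · rw [if_neg hab, XB_anticomm hab, neg_add_cancel]

/-- The chirality element of the big Clifford–Weyl algebra. -/
noncomputable def GammaB (m n k : ℕ) : CliffordWeyl (2 * m + n) k := chi (XB m n k)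

lemma GammaB_sq : GammaB m n k * GammaB m n k = 1 :=
  chi_mul_self _ XB_sq (fun _ _ h => XB_anticomm h)

lemma XB_mul_GammaB (a : Fin (2 * m)) :
    XB m n k a * GammaB m n k = -(GammaB m n k * XB m n k a) :=
  mul_chi_self_anticomm _ a XB_sq (fun _ _ h => XB_anticomm h) (by have := a.pos; omega)

lemma Wn_mul_GammaB (j : Fin n) :
    W (Fin.natAdd (2 * m) j) * GammaB m n k = GammaB m n k * W (Fin.natAdd (2 * m) j) :=
  mul_chi_of_anticomm _ _ (fun a => W_anticomm (Ne.symm (castAdd_ne_natAdd a j)))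

lemma P_mul_GammaB (j : Fin k) :
    (P j : CliffordWeyl (2 * m + n) k) * GammaB m n k = GammaB m n k * P j :=
  mul_chi_of_anticomm _ _ (fun a => by
    show P j * W (Fin.castAdd n a) = -(W (Fin.castAdd n a) * P j)
    rw [rel_wp (Fin.castAdd n a) j, neg_neg])

lemma Qg_mul_GammaB (j : Fin k) :
    (Qg j : CliffordWeyl (2 * m + n) k) * GammaB m n k = GammaB m n k * Qg j :=
  mul_chi_of_anticomm _ _ (fun a => by
    show Qg j * W (Fin.castAdd n a) = -(W (Fin.castAdd n a) * Qg j)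
    rw [rel_wq (Fin.castAdd n a) j, neg_neg])

lemma Gamma_pair {Y Z : CliffordWeyl (2 * m + n) k} (hY : Y * GammaB m n k = GammaB m n k * Y) :
    (GammaB m n k * Y) * (GammaB m n k * Z) = Y * Z := by
  calc (GammaB m n k * Y) * (GammaB m n k * Z)
      = GammaB m n k * ((Y * GammaB m n k) * Z) := by simp only [mul_assoc]
    _ = GammaB m n k * ((GammaB m n k * Y) * Z) := by rw [hY]
    _ = (GammaB m n k * GammaB m n k) * (Y * Z) := by simp only [mul_assoc]
    _ = Y * Z := by rw [GammaB_sq, one_mul]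

/-- The linear map underlying the Clifford factor of the backward map. -/
noncomputable def fB (m n k : ℕ) : (Fin (2 * m) → ℂ) →ₗ[ℂ] CliffordWeyl (2 * m + n) k where
  toFun v := ∑ a, v a • XB m n k a
  map_add' u v := by
    simp only [Pi.add_apply, add_smul, Finset.sum_add_distrib]
  map_smul' c v := by
    simp only [Pi.smul_apply, smul_eq_mul, RingHom.id_apply, Finset.smul_sum, smul_smul]

/-- The Clifford factor of the backward map. -/
noncomputable def phiB (m n k : ℕ) : CliffordC (2 * m) →ₐ[ℂ] CliffordWeyl (2 * m + n) k :=
  CliffordAlgebra.lift (Qf (2 * m)) ⟨fB m n k, by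
    intro v
    show (∑ a, v a • XB m n k a) * (∑ a, v a • XB m n k a) = _
    rw [sum_smul_sq (XB m n k) XB_rel v, Qf_apply]⟩

lemma phiB_eC (a : Fin (2 * m)) : phiB m n k (eC a) = XB m n k a := by
  rw [eC, phiB, CliffordAlgebra.lift_ι_apply]
  exact sum_single_smul (XB m n k) a

lemma phiB_gammaC : phiB m n k (gammaC m) = GammaB m n k := by
  rw [gammaC, GammaB, chi, chi, map_smul, map_list_prod, List.map_ofFn]
  congr 2
  exact congrArg List.ofFn (funext fun a => phiB_eC a)

/-- Images of the generators under the Clifford–Weyl factor of the backward map. -/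
noncomputable def gB (m n k : ℕ) : CWGen n k → CliffordWeyl (2 * m + n) k
  | CWGen.w j => GammaB m n k * W (Fin.natAdd (2 * m) j)
  | CWGen.p j => GammaB m n k * P j
  | CWGen.q j => GammaB m n k * Qg j

/-- The backward map on the free algebra of the small Clifford–Weyl algebra. -/
noncomputable def BA (m n k : ℕ) :
    FreeAlgebra ℂ (CWGen n k) →ₐ[ℂ] CliffordWeyl (2 * m + n) k :=
  FreeAlgebra.lift ℂ (gB m n k)

lemma BA_rel : ∀ ⦃x y⦄, CWRel n k x y → BA m n k x = BA m n k y := by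
  intro x y h
  induction h with
  | ww i j =>
    simp only [BA, map_add, map_mul, FreeAlgebra.lift_ι_apply, gB]
    rw [Gamma_pair (Wn_mul_GammaB i), Gamma_pair (Wn_mul_GammaB j), rel_ww]
    rcases eq_or_ne i j with rfl | hij
    · rw [if_pos rfl, if_pos rfl, map_ofNat]
    · rw [if_neg hij, if_neg (by simpa [Fin.ext_iff] using Fin.val_ne_of_ne hij), map_zero]
  | pq i j =>
    simp only [BA, map_sub, map_mul, FreeAlgebra.lift_ι_apply, gB]
    rw [Gamma_pair (P_mul_GammaB i), Gamma_pair (Qg_mul_GammaB j), rel_pq]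
    rcases eq_or_ne i j with rfl | hij
    · rw [if_pos rfl, if_pos rfl, map_one]
    · rw [if_neg hij, if_neg hij, map_zero]
  | pp i j =>
    simp only [BA, map_mul, FreeAlgebra.lift_ι_apply, gB]
    rw [Gamma_pair (P_mul_GammaB i), Gamma_pair (P_mul_GammaB j), rel_pp]
  | qq i j =>
    simp only [BA, map_mul, FreeAlgebra.lift_ι_apply, gB]
    rw [Gamma_pair (Qg_mul_GammaB i), Gamma_pair (Qg_mul_GammaB j), rel_qq]
  | wp i j =>
    simp only [BA, map_mul, map_neg, FreeAlgebra.lift_ι_apply, gB]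
    rw [Gamma_pair (Wn_mul_GammaB i), Gamma_pair (P_mul_GammaB j), rel_wp]
  | wq i j =>
    simp only [BA, map_mul, map_neg, FreeAlgebra.lift_ι_apply, gB]
    rw [Gamma_pair (Wn_mul_GammaB i), Gamma_pair (Qg_mul_GammaB j), rel_wq]

/-- The Clifford–Weyl factor of the backward map. -/
noncomputable def psiB (m n k : ℕ) : CliffordWeyl n k →ₐ[ℂ] CliffordWeyl (2 * m + n) k :=
  RingQuot.liftAlgHom ℂ ⟨BA m n k, BA_rel⟩

lemma commute_XB_BA (a : Fin (2 * m)) (x : FreeAlgebra ℂ (CWGen n k)) :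
    Commute (XB m n k a) (BA m n k x) := by
  induction x using FreeAlgebra.induction with
  | grade0 r =>
    rw [AlgHom.commutes]
    exact (Algebra.commutes r (XB m n k a)).symm
  | grade1 g =>
    rw [BA, FreeAlgebra.lift_ι_apply]
    cases g with
    | w j =>
      exact commute_of_double_anticomm _ _ _ (XB_mul_GammaB a)
        (W_anticomm (castAdd_ne_natAdd a j))
    | p j =>
      exact commute_of_double_anticomm _ _ _ (XB_mul_GammaB a) (rel_wp _ j)
    | q j =>
      exact commute_of_double_anticomm _ _ _ (XB_mul_GammaB a) (rel_wq _ j)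
  | mul x y hx hy => rw [map_mul]; exact hx.mul_right hy
  | add x y hx hy => rw [map_add]; exact hx.add_right hy

lemma commute_phiB_psiB (x : CliffordC (2 * m)) (y : CliffordWeyl n k) :
    Commute (phiB m n k x) (psiB m n k y) := by
  obtain ⟨a, rfl⟩ := RingQuot.mkAlgHom_surjective ℂ (CWRel n k) y
  rw [psiB, RingQuot.liftAlgHom_mkAlgHom_apply]
  induction x using CliffordAlgebra.induction with
  | algebraMap r => rw [AlgHom.commutes]; exact Algebra.commutes r _
  | ι v =>
    rw [phiB, CliffordAlgebra.lift_ι_apply]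
    show Commute (∑ i, v i • XB m n k i) _
    show (∑ i, v i • XB m n k i) * _ = _ * (∑ i, v i • XB m n k i)
    rw [Finset.sum_mul, Finset.mul_sum]
    exact Finset.sum_congr rfl fun i _ => by
      rw [smul_mul_assoc, mul_smul_comm, (commute_XB_BA i a).eq]
  | mul x y hx hy => rw [map_mul]; exact hx.mul_left hy
  | add x y hx hy => rw [map_add]; exact hx.add_left hy

/-- The backward algebra homomorphism. -/
noncomputable def Gmap (m n k : ℕ) :
    (CliffordC (2 * m) ⊗[ℂ] CliffordWeyl n k) →ₐ[ℂ] CliffordWeyl (2 * m + n) k :=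
  Algebra.TensorProduct.lift (phiB m n k) (psiB m n k) commute_phiB_psiB

end Back

section RoundTrip

open CliffordWeyl

variable {m n k : ℕ}

lemma Fmap_gen (g : CWGen (2 * m + n) k) :
    Fmap m n k (RingQuot.mkAlgHom ℂ (CWRel (2 * m + n) k) (FreeAlgebra.ι ℂ g))
      = gF m n k g := by
  rw [Fmap, RingQuot.liftAlgHom_mkAlgHom_apply, FA, FreeAlgebra.lift_ι_apply]

lemma psiB_gen (g : CWGen n k) :
    psiB m n k (RingQuot.mkAlgHom ℂ (CWRel n k) (FreeAlgebra.ι ℂ g)) = gB m n k g := by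
  rw [psiB, RingQuot.liftAlgHom_mkAlgHom_apply, BA, FreeAlgebra.lift_ι_apply]

lemma Fmap_XB (a : Fin (2 * m)) :
    Fmap m n k (XB m n k a) = eC a ⊗ₜ (1 : CliffordWeyl n k) := by
  have h : Fmap m n k (XB m n k a) = gF m n k (CWGen.w (Fin.castAdd n a)) :=
    Fmap_gen (CWGen.w (Fin.castAdd n a))
  rw [h]
  simp [gF]

lemma Fmap_GammaB :
    Fmap m n k (GammaB m n k) = gammaC m ⊗ₜ (1 : CliffordWeyl n k) := by
  rw [GammaB, chi, map_smul, map_list_prod, List.map_ofFn]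
  have h1 : (⇑(Fmap m n k)) ∘ (XB m n k)
      = fun a => (eC a ⊗ₜ (1 : CliffordWeyl n k)) := funext fun a => Fmap_XB a
  rw [h1]
  have h2 : (List.ofFn fun a : Fin (2 * m) => (eC a ⊗ₜ[ℂ] (1 : CliffordWeyl n k))).prod
      = (List.ofFn (eC (r := 2 * m))).prod ⊗ₜ[ℂ] (1 : CliffordWeyl n k) := by
    have h3 : (fun a : Fin (2 * m) => (eC a ⊗ₜ[ℂ] (1 : CliffordWeyl n k)))
        = (⇑(Algebra.TensorProduct.includeLeft
            (R := ℂ) (S := ℂ) (A := CliffordC (2 * m)) (B := CliffordWeyl n k)) ∘ eC) := rfl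
    rw [h3, ← List.map_ofFn, ← map_list_prod]
    simp
  rw [h2, gammaC, chi, TensorProduct.smul_tmul']

lemma GF_id : (Gmap m n k).comp (Fmap m n k) = AlgHom.id ℂ (CliffordWeyl (2 * m + n) k) := by
  apply RingQuot.ringQuot_ext'
  apply FreeAlgebra.hom_ext
  funext g
  simp only [Function.comp_apply, AlgHom.comp_apply, AlgHom.id_apply]
  rw [Fmap_gen g]
  cases g with
  | w i =>
    show Gmap m n k (gF m n k (CWGen.w i)) = W i
    induction i using Fin.addCases with
    | left a =>
      simp only [gF, Fin.addCases_left]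
      rw [Gmap, Algebra.TensorProduct.lift_tmul, phiB_eC, map_one, mul_one]
      rfl
    | right j =>
      simp only [gF, Fin.addCases_right]
      rw [Gmap, Algebra.TensorProduct.lift_tmul, phiB_gammaC,
        show (W j : CliffordWeyl n k)
          = RingQuot.mkAlgHom ℂ (CWRel n k) (FreeAlgebra.ι ℂ (CWGen.w j)) from rfl,
        psiB_gen (CWGen.w j)]
      show GammaB m n k * (GammaB m n k * W (Fin.natAdd (2 * m) j)) = _
      rw [← mul_assoc, GammaB_sq, one_mul]
  | p j =>
    show Gmap m n k (gF m n k (CWGen.p j)) = P j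
    simp only [gF]
    rw [Gmap, Algebra.TensorProduct.lift_tmul, phiB_gammaC,
      show (P j : CliffordWeyl n k)
        = RingQuot.mkAlgHom ℂ (CWRel n k) (FreeAlgebra.ι ℂ (CWGen.p j)) from rfl,
      psiB_gen (CWGen.p j)]
    show GammaB m n k * (GammaB m n k * P j) = _
    rw [← mul_assoc, GammaB_sq, one_mul]
  | q j =>
    show Gmap m n k (gF m n k (CWGen.q j)) = Qg j
    simp only [gF]
    rw [Gmap, Algebra.TensorProduct.lift_tmul, phiB_gammaC,
      show (Qg j : CliffordWeyl n k)
        = RingQuot.mkAlgHom ℂ (CWRel n k) (FreeAlgebra.ι ℂ (CWGen.q j)) from rfl,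
      psiB_gen (CWGen.q j)]
    show GammaB m n k * (GammaB m n k * Qg j) = _
    rw [← mul_assoc, GammaB_sq, one_mul]

lemma iota_sum {r : ℕ} (v : Fin r → ℂ) :
    CliffordAlgebra.ι (Qf r) v = ∑ i, v i • eC i := by
  calc CliffordAlgebra.ι (Qf r) v
      = CliffordAlgebra.ι (Qf r) (∑ i, Pi.single i (v i)) := by
        rw [Finset.univ_sum_single]
    _ = ∑ i, CliffordAlgebra.ι (Qf r) (Pi.single i (v i)) := map_sum _ _ _
    _ = ∑ i, v i • eC i := Finset.sum_congr rfl fun i _ => by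
        rw [eC, ← map_smul]
        congr 1
        rw [← Pi.single_smul, smul_eq_mul, mul_one]

lemma Fmap_phiB : (Fmap m n k).comp (phiB m n k)
    = Algebra.TensorProduct.includeLeft (S := ℂ) := by
  apply CliffordAlgebra.hom_ext
  apply LinearMap.ext
  intro v
  simp only [LinearMap.coe_comp, Function.comp_apply, AlgHom.toLinearMap_apply,
    AlgHom.comp_apply, Algebra.TensorProduct.includeLeft_apply]
  have h1 : phiB m n k (CliffordAlgebra.ι (Qf (2 * m)) v) = ∑ a, v a • XB m n k a := by
    rw [phiB, CliffordAlgebra.lift_ι_apply]; rfl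
  rw [h1, map_sum]
  have h2 : ∀ a : Fin (2 * m), Fmap m n k (v a • XB m n k a)
      = v a • (eC a ⊗ₜ (1 : CliffordWeyl n k)) := fun a => by
    rw [map_smul, Fmap_XB]
  rw [Finset.sum_congr rfl fun a _ => h2 a]
  have h3 : ∀ a : Fin (2 * m), v a • (eC a ⊗ₜ[ℂ] (1 : CliffordWeyl n k))
      = (v a • eC a) ⊗ₜ[ℂ] (1 : CliffordWeyl n k) := fun a => by
    rw [TensorProduct.smul_tmul']
  rw [Finset.sum_congr rfl fun a _ => h3 a, ← TensorProduct.sum_tmul, ← iota_sum]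

lemma Fmap_psiB : (Fmap m n k).comp (psiB m n k)
    = Algebra.TensorProduct.includeRight (R := ℂ) (A := CliffordC (2 * m)) := by
  apply RingQuot.ringQuot_ext'
  apply FreeAlgebra.hom_ext
  funext g
  simp only [Function.comp_apply, AlgHom.comp_apply]
  rw [psiB_gen g]
  cases g with
  | w j =>
    show Fmap m n k (GammaB m n k * W (Fin.natAdd (2 * m) j)) = _
    rw [map_mul, Fmap_GammaB,
      show Fmap m n k (W (Fin.natAdd (2 * m) j)) = gF m n k (CWGen.w (Fin.natAdd (2 * m) j))
        from Fmap_gen _]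
    simp only [gF, Fin.addCases_right, Algebra.TensorProduct.tmul_mul_tmul, gammaC_sq, one_mul]
    rfl
  | p j =>
    show Fmap m n k (GammaB m n k * P j) = _
    rw [map_mul, Fmap_GammaB,
      show Fmap m n k (P j : CliffordWeyl (2 * m + n) k) = gF m n k (CWGen.p j)
        from Fmap_gen _]
    simp only [gF, Algebra.TensorProduct.tmul_mul_tmul, gammaC_sq, one_mul]
    rfl
  | q j =>
    show Fmap m n k (GammaB m n k * Qg j) = _
    rw [map_mul, Fmap_GammaB,
      show Fmap m n k (Qg j : CliffordWeyl (2 * m + n) k) = gF m n k (CWGen.q j)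
        from Fmap_gen _]
    simp only [gF, Algebra.TensorProduct.tmul_mul_tmul, gammaC_sq, one_mul]
    rfl

lemma FG_id : (Fmap m n k).comp (Gmap m n k)
    = AlgHom.id ℂ (CliffordC (2 * m) ⊗[ℂ] CliffordWeyl n k) := by
  apply Algebra.TensorProduct.ext'
  intro a b
  simp only [AlgHom.comp_apply, AlgHom.id_apply]
  rw [Gmap, Algebra.TensorProduct.lift_tmul, map_mul]
  have h1 : Fmap m n k (phiB m n k a) = a ⊗ₜ (1 : CliffordWeyl n k) := by
    have := AlgHom.congr_fun (Fmap_phiB (m := m) (n := n) (k := k)) a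
    simpa using this
  have h2 : Fmap m n k (psiB m n k b) = (1 : CliffordC (2 * m)) ⊗ₜ b := by
    have := AlgHom.congr_fun (Fmap_psiB (m := m) (n := n) (k := k)) b
    simpa using this
  rw [h1, h2, Algebra.TensorProduct.tmul_mul_tmul, one_mul, mul_one]

end RoundTrip

/-- Periodicity Lemma for Clifford–Weyl algebras:
`C(2m+n, 2k) ≅ C(2m) ⊗[ℂ] C(n, 2k)` as ℂ-algebras. -/
theorem cliffordWeyl_periodicity (m n k : ℕ) :
    Nonempty (CliffordWeyl (2 * m + n) k ≃ₐ[ℂ]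
      (CliffordC (2 * m) ⊗[ℂ] CliffordWeyl n k)) := by
  exact ⟨AlgEquiv.ofAlgHom (Fmap m n k) (Gmap m n k) FG_id GF_id⟩
end

section
/- For all n, k ∈ ℕ there is an isomorphism of ℂ-algebras C(2n, 2k) ≅ Matrix (Fin 2^n) (Fin 2^n) W_{2k}, the algebra of 2^n × 2^n matrices with entries in the Weyl algebra W_{2k}. -/
set_option linter.unusedSectionVars false
set_option linter.unnecessarySimpa false
set_option maxHeartbeats 1000000

noncomputable section

open Finset in
/-- Lift a family of matrix units and a commuting algebra map to an algebra hom
out of a matrix algebra. -/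
def matrixLift {R S : Type*} [Ring R] [Algebra ℂ R] [Ring S] [Algebra ℂ S]
    {m : Type*} [Fintype m] [DecidableEq m]
    (E : m → m → R) (f : S →ₐ[ℂ] R)
    (hmul : ∀ a b c d, E a b * E c d = if b = c then E a d else 0)
    (hone : (∑ a, E a a) = 1)
    (hcomm : ∀ a b s, E a b * f s = f s * E a b) :
    Matrix m m S →ₐ[ℂ] R := by
  refine AlgHom.ofLinearMap
    { toFun := fun M => ∑ a, ∑ b, E a b * f (M a b)
      map_add' := ?_
      map_smul' := ?_ } ?_ ?_
  · intro M N
    simp [Matrix.add_apply, mul_add, Finset.sum_add_distrib]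
  · intro c M
    simp [Matrix.smul_apply, Finset.smul_sum, mul_smul_comm]
  · simp only [LinearMap.coe_mk, AddHom.coe_mk]
    simp only [Matrix.one_apply, apply_ite f, map_one, map_zero, mul_ite, mul_one, mul_zero]
    simpa using hone
  · intro M N
    simp only [LinearMap.coe_mk, AddHom.coe_mk]
    calc ∑ a, ∑ b, E a b * f ((M * N) a b)
        = ∑ a, ∑ b, ∑ d, E a d * (f (M a b) * f (N b d)) := by
          simp only [Matrix.mul_apply, map_sum, map_mul, Finset.mul_sum]
          exact sum_congr rfl fun a _ => Finset.sum_comm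
      _ = ∑ a, ∑ b, ∑ c, ∑ d, (if b = c then E a d else 0) * (f (M a b) * f (N c d)) := by
          refine sum_congr rfl fun a _ => sum_congr rfl fun b _ => ?_
          rw [Finset.sum_comm]
          refine sum_congr rfl fun d _ => ?_
          simp [Finset.sum_ite_eq, ite_mul]
      _ = (∑ a, ∑ b, E a b * f (M a b)) * (∑ c, ∑ d, E c d * f (N c d)) := by
          rw [Finset.sum_mul]
          refine sum_congr rfl fun a _ => ?_
          rw [Finset.sum_mul]
          refine sum_congr rfl fun b _ => ?_
          rw [Finset.mul_sum]
          refine sum_congr rfl fun c _ => ?_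
          rw [Finset.mul_sum]
          refine sum_congr rfl fun d _ => ?_
          rw [← hmul a b c d, mul_assoc, ← mul_assoc (E c d), hcomm c d, mul_assoc,
            ← mul_assoc]

open Finset in
lemma matrixLift_apply {R S : Type*} [Ring R] [Algebra ℂ R] [Ring S] [Algebra ℂ S]
    (E : Fin 2 → Fin 2 → R) (f : S →ₐ[ℂ] R) (hmul) (hone) (hcomm)
    (M : Matrix (Fin 2) (Fin 2) S) :
    matrixLift E f hmul hone hcomm M =
      E 0 0 * f (M 0 0) + E 0 1 * f (M 0 1) + (E 1 0 * f (M 1 0) + E 1 1 * f (M 1 1)) := by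
  show (∑ a : Fin 2, ∑ b : Fin 2, E a b * f (M a b)) = _
  rw [Fin.sum_univ_two, Fin.sum_univ_two, Fin.sum_univ_two]




/-- Generators of the Weyl algebra `W_{2k}`: `p_i, q_i` for `i ∈ Fin k`. -/
inductive WGen (k : ℕ) : Type
  | p : Fin k → WGen k
  | q : Fin k → WGen k

/-- The defining relations of the Weyl algebra `W_{2k}`:
`p_i q_j − q_j p_i = δ_{ij}`, `p_i p_j = p_j p_i`, `q_i q_j = q_j q_i`. -/
inductive WRel (k : ℕ) : FreeAlgebra ℂ (WGen k) → FreeAlgebra ℂ (WGen k) → Prop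
  | pq (i j : Fin k) : WRel k
      (FreeAlgebra.ι ℂ (WGen.p i) * FreeAlgebra.ι ℂ (WGen.q j) -
        FreeAlgebra.ι ℂ (WGen.q j) * FreeAlgebra.ι ℂ (WGen.p i))
      (if i = j then 1 else 0)
  | pp (i j : Fin k) : WRel k
      (FreeAlgebra.ι ℂ (WGen.p i) * FreeAlgebra.ι ℂ (WGen.p j))
      (FreeAlgebra.ι ℂ (WGen.p j) * FreeAlgebra.ι ℂ (WGen.p i))
  | qq (i j : Fin k) : WRel k
      (FreeAlgebra.ι ℂ (WGen.q i) * FreeAlgebra.ι ℂ (WGen.q j))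
      (FreeAlgebra.ι ℂ (WGen.q j) * FreeAlgebra.ι ℂ (WGen.q i))

/-- The Weyl algebra `W_{2k}`, presented by generators and relations. -/
abbrev WeylAlg (k : ℕ) : Type := RingQuot (WRel k)


/-! Generators as elements, and relations. -/

def cwGen {n k : ℕ} (g : CWGen n k) : CliffordWeyl n k :=
  RingQuot.mkAlgHom ℂ (CWRel n k) (FreeAlgebra.ι ℂ g)

def wGen {k : ℕ} (g : WGen k) : WeylAlg k :=
  RingQuot.mkAlgHom ℂ (WRel k) (FreeAlgebra.ι ℂ g)

section Rels
variable {n k : ℕ}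

lemma cw_ww (i j : Fin n) : cwGen (k := k) (CWGen.w i) * cwGen (CWGen.w j) +
    cwGen (CWGen.w j) * cwGen (CWGen.w i) = if i = j then 2 else 0 := by
  simpa [cwGen, apply_ite (RingQuot.mkAlgHom ℂ (CWRel n k)), map_ofNat] using
    RingQuot.mkAlgHom_rel ℂ (CWRel.ww (k := k) i j)

lemma cw_pq (i j : Fin k) : cwGen (n := n) (CWGen.p i) * cwGen (CWGen.q j) -
    cwGen (CWGen.q j) * cwGen (CWGen.p i) = if i = j then 1 else 0 := by
  simpa [cwGen, apply_ite (RingQuot.mkAlgHom ℂ (CWRel n k))] using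
    RingQuot.mkAlgHom_rel ℂ (CWRel.pq (n := n) i j)

lemma cw_pp (i j : Fin k) : cwGen (n := n) (CWGen.p i) * cwGen (CWGen.p j) =
    cwGen (CWGen.p j) * cwGen (CWGen.p i) := by
  simpa [cwGen] using RingQuot.mkAlgHom_rel ℂ (CWRel.pp (n := n) i j)

lemma cw_qq (i j : Fin k) : cwGen (n := n) (CWGen.q i) * cwGen (CWGen.q j) =
    cwGen (CWGen.q j) * cwGen (CWGen.q i) := by
  simpa [cwGen] using RingQuot.mkAlgHom_rel ℂ (CWRel.qq (n := n) i j)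

lemma cw_wp (i : Fin n) (j : Fin k) : cwGen (CWGen.w i) * cwGen (CWGen.p j) =
    -(cwGen (CWGen.p j) * cwGen (CWGen.w i)) := by
  simpa [cwGen] using RingQuot.mkAlgHom_rel ℂ (CWRel.wp i j)

lemma cw_wq (i : Fin n) (j : Fin k) : cwGen (CWGen.w i) * cwGen (CWGen.q j) =
    -(cwGen (CWGen.q j) * cwGen (CWGen.w i)) := by
  simpa [cwGen] using RingQuot.mkAlgHom_rel ℂ (CWRel.wq i j)

lemma w_pq (i j : Fin k) : wGen (WGen.p i) * wGen (WGen.q j) -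
    wGen (WGen.q j) * wGen (WGen.p i) = if i = j then 1 else 0 := by
  simpa [wGen, apply_ite (RingQuot.mkAlgHom ℂ (WRel k))] using
    RingQuot.mkAlgHom_rel ℂ (WRel.pq i j)

lemma w_pp (i j : Fin k) : wGen (WGen.p i) * wGen (WGen.p j) =
    wGen (WGen.p j) * wGen (WGen.p i) := by
  simpa [wGen] using RingQuot.mkAlgHom_rel ℂ (WRel.pp i j)

lemma w_qq (i j : Fin k) : wGen (WGen.q i) * wGen (WGen.q j) =
    wGen (WGen.q j) * wGen (WGen.q i) := by
  simpa [wGen] using RingQuot.mkAlgHom_rel ℂ (WRel.qq i j)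

end Rels

/-! The base case `C(0, 2k) ≃ W_{2k}`. -/

def toWeyl (k : ℕ) : CliffordWeyl 0 k →ₐ[ℂ] WeylAlg k :=
  RingQuot.liftAlgHom ℂ ⟨FreeAlgebra.lift ℂ fun g =>
    match g with
    | CWGen.w i => i.elim0
    | CWGen.p j => wGen (WGen.p j)
    | CWGen.q j => wGen (WGen.q j), by
      rintro x y (⟨i, j⟩ | ⟨i, j⟩ | ⟨i, j⟩ | ⟨i, j⟩ | ⟨i, j⟩ | ⟨i, j⟩)
      · exact i.elim0
      · simp only [map_sub, map_mul, FreeAlgebra.lift_ι_apply]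
        rw [w_pq i j]
        split_ifs <;> simp
      · simp only [map_mul, FreeAlgebra.lift_ι_apply]
        exact w_pp i j
      · simp only [map_mul, FreeAlgebra.lift_ι_apply]
        exact w_qq i j
      · exact i.elim0
      · exact i.elim0⟩

def toCW0 (k : ℕ) : WeylAlg k →ₐ[ℂ] CliffordWeyl 0 k :=
  RingQuot.liftAlgHom ℂ ⟨FreeAlgebra.lift ℂ fun g =>
    match g with
    | WGen.p j => cwGen (CWGen.p j)
    | WGen.q j => cwGen (CWGen.q j), by
      rintro x y (⟨i, j⟩ | ⟨i, j⟩ | ⟨i, j⟩)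
      · simp only [map_sub, map_mul, FreeAlgebra.lift_ι_apply]
        rw [cw_pq i j]
        split_ifs <;> simp
      · simp only [map_mul, FreeAlgebra.lift_ι_apply]
        exact cw_pp i j
      · simp only [map_mul, FreeAlgebra.lift_ι_apply]
        exact cw_qq i j⟩

lemma toWeyl_gen (k : ℕ) (g : CWGen 0 k) : toWeyl k (cwGen g) =
    match g with
    | CWGen.w i => i.elim0
    | CWGen.p j => wGen (WGen.p j)
    | CWGen.q j => wGen (WGen.q j) := by
  simp [toWeyl, cwGen, RingQuot.liftAlgHom_mkAlgHom_apply]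

lemma toCW0_gen (k : ℕ) (g : WGen k) : toCW0 k (wGen g) =
    match g with
    | WGen.p j => cwGen (CWGen.p j)
    | WGen.q j => cwGen (CWGen.q j) := by
  simp [toCW0, wGen, RingQuot.liftAlgHom_mkAlgHom_apply]

def baseEquiv (k : ℕ) : CliffordWeyl 0 k ≃ₐ[ℂ] WeylAlg k := by
  refine AlgEquiv.ofAlgHom (toWeyl k) (toCW0 k) ?_ ?_
  · apply RingQuot.ringQuot_ext'
    apply FreeAlgebra.hom_ext
    funext g
    rcases g with j | j
    all_goals
      simp only [Function.comp_apply, AlgHom.comp_apply, AlgHom.id_apply,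
        RingQuot.mkAlgHom_rel]
      show toWeyl k (toCW0 k (wGen _)) = wGen _
      rw [toCW0_gen]
      exact toWeyl_gen k _
  · apply RingQuot.ringQuot_ext'
    apply FreeAlgebra.hom_ext
    funext g
    rcases g with i | j | j
    · exact i.elim0
    all_goals
      show toCW0 k (toWeyl k (cwGen _)) = cwGen _
      rw [toWeyl_gen]
      exact toCW0_gen k _

/-! ### Generic algebra lemmas (proved over an arbitrary ring, where `rw` works). -/

section GenericC
variable {C : Type*} [Ring C] [Algebra ℂ C]

lemma gen_anticomm {a b : C} (h : a * b + b * a = 0) : a * b = -(b * a) :=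
  eq_neg_of_add_eq_zero_left h

lemma gen_add_eq_zero {a b : C} (h : a = -b) : a + b = 0 := by rw [h]; simp

lemma gen_sq_of_two {a : C} (h : a + a = 2) : a = 1 := by
  have h2 : (2 : ℂ) • a = (2 : ℂ) • (1 : C) := by
    rw [two_smul, two_smul, h, one_add_one_eq_two]
  exact smul_right_injective C (by norm_num : (2 : ℂ) ≠ 0) h2

lemma gen_swap3 {a b x : C} (h : a * b = -(b * a)) : a * (b * x) = -(b * (a * x)) := by
  rw [← mul_assoc, h, neg_mul, mul_assoc]

lemma gen_sq3 {a x : C} (h : a * a = 1) : a * (a * x) = x := by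
  rw [← mul_assoc, h, one_mul]

lemma gen_gam_sq {a b : C} (ha : a * a = 1) (hb : b * b = 1) (hba : b * a = -(a * b)) :
    (Complex.I • (a * b)) * (Complex.I • (a * b)) = 1 := by
  have key : (a * b) * (a * b) = -1 := by
    rw [mul_assoc, gen_swap3 hba, mul_neg, gen_sq3 ha, hb]
  rw [smul_mul_smul_comm, Complex.I_mul_I, key]
  simp

lemma gen_gam_a {a b : C} (hba : b * a = -(a * b)) :
    (Complex.I • (a * b)) * a = -(a * (Complex.I • (a * b))) := by
  rw [smul_mul_assoc, mul_smul_comm, ← smul_neg]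
  congr 1
  rw [mul_assoc, hba, mul_neg]

lemma gen_gam_comm {a b x : C} (h0 : a * x = -(x * a)) (h1 : b * x = -(x * b)) :
    (Complex.I • (a * b)) * x = x * (Complex.I • (a * b)) := by
  rw [smul_mul_assoc, mul_smul_comm]
  congr 1
  rw [mul_assoc, h1, mul_neg, ← mul_assoc, h0, neg_mul, neg_neg, mul_assoc]

lemma gen_gam_mul_mul {g x y : C} (hg : g * g = 1) (hx : g * x = x * g) :
    (g * x) * (g * y) = x * y := by
  rw [mul_assoc, ← mul_assoc x g y, ← hx, mul_assoc g x y, ← mul_assoc, hg, one_mul]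

end GenericC

section GenericE
variable {C : Type*} [Ring C] [Algebra ℂ C]

/-- Spectral projection `(1-g)/2` for an involution `g`. -/
def genP0 (g : C) : C := (1/2 : ℂ) • (1 - g)
/-- Spectral projection `(1+g)/2` for an involution `g`. -/
def genP1 (g : C) : C := (1/2 : ℂ) • (1 + g)

/-- Matrix units built from an involution `g` and an element `t` with `t² = 1`,
`tg = -gt`. -/
def genE (g t : C) : Fin 2 → Fin 2 → C := fun i j =>
  if i = 0 then (if j = 0 then genP0 g else genP0 g * t)
  else (if j = 0 then genP1 g * t else genP1 g)

variable {g t : C}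

lemma genP_mul_00 (hg : g * g = 1) : genP0 g * genP0 g = genP0 g := by
  unfold genP0
  rw [smul_mul_smul_comm, sub_mul, one_mul, mul_sub, mul_one, hg]
  module

lemma genP_mul_11 (hg : g * g = 1) : genP1 g * genP1 g = genP1 g := by
  unfold genP1
  rw [smul_mul_smul_comm, add_mul, one_mul, mul_add, mul_one, hg]
  module

lemma genP_mul_01 (hg : g * g = 1) : genP0 g * genP1 g = 0 := by
  unfold genP0 genP1
  rw [smul_mul_smul_comm, sub_mul, one_mul, mul_add, mul_one, hg]
  module

lemma genP_mul_10 (hg : g * g = 1) : genP1 g * genP0 g = 0 := by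
  unfold genP0 genP1
  rw [smul_mul_smul_comm, add_mul, one_mul, mul_sub, mul_one, hg]
  module

lemma genP_sum : genP0 g + genP1 g = 1 := by
  unfold genP0 genP1
  module

lemma genP_diff : genP1 g - genP0 g = g := by
  unfold genP0 genP1
  module

lemma gent_P0 (htg : t * g = -(g * t)) : t * genP0 g = genP1 g * t := by
  unfold genP0 genP1
  rw [mul_smul_comm, smul_mul_assoc]
  congr 1
  rw [mul_sub, mul_one, htg, sub_neg_eq_add, add_mul, one_mul]

lemma gent_P1 (htg : t * g = -(g * t)) : t * genP1 g = genP0 g * t := by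
  unfold genP0 genP1
  rw [mul_smul_comm, smul_mul_assoc]
  congr 1
  rw [mul_add, mul_one, htg, sub_mul, one_mul, ← sub_eq_add_neg]

lemma genP0_comm {x : C} (hgx : g * x = x * g) : genP0 g * x = x * genP0 g := by
  unfold genP0
  rw [smul_mul_assoc, mul_smul_comm]
  congr 1
  rw [sub_mul, one_mul, mul_sub, mul_one, hgx]

lemma genP1_comm {x : C} (hgx : g * x = x * g) : genP1 g * x = x * genP1 g := by
  unfold genP1
  rw [smul_mul_assoc, mul_smul_comm]
  congr 1
  rw [add_mul, one_mul, mul_add, mul_one, hgx]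

/-- Helper: 3-factor version of a 2-factor rewrite. -/
lemma gen_mul3 {p q r x : C} (h : p * q = r) : p * (q * x) = r * x := by
  rw [← mul_assoc, h]

lemma genE_mul (hg : g * g = 1) (ht : t * t = 1) (htg : t * g = -(g * t))
    (i j a b : Fin 2) :
    genE g t i j * genE g t a b = if j = a then genE g t i b else 0 := by
  have h00 := genP_mul_00 hg
  have h01 := genP_mul_01 hg
  have h10 := genP_mul_10 hg
  have h11 := genP_mul_11 hg
  have ht0 := gent_P0 htg
  have ht1 := gent_P1 htg
  have m3 : ∀ {p q r x : C}, p * q = r → p * (q * x) = r * x := by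
    intro p q r x h; rw [← mul_assoc, h]
  fin_cases i <;> fin_cases j <;> fin_cases a <;> fin_cases b <;>
    norm_num [genE, Fin.ext_iff] <;>
    simp only [mul_assoc, m3 h00, m3 h01, m3 h10, m3 h11, m3 ht0, m3 ht1, m3 ht,
      h00, h01, h10, h11, ht0, ht1, ht, zero_mul, mul_zero, one_mul, mul_one]

lemma genE_sum : (∑ a : Fin 2, genE g t a a) = 1 := by
  rw [Fin.sum_univ_two]
  norm_num [genE]
  exact genP_sum

lemma genE_comm {x : C} (hgx : g * x = x * g) (htx : t * x = x * t) (i j : Fin 2) :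
    genE g t i j * x = x * genE g t i j := by
  have c0 := genP0_comm hgx
  have c1 := genP1_comm hgx
  fin_cases i <;> fin_cases j <;> norm_num [genE, Fin.ext_iff] <;>
    first
    | exact c0
    | exact c1
    | (rw [mul_assoc, htx, ← mul_assoc, c0, mul_assoc])
    | (rw [mul_assoc, htx, ← mul_assoc, c1, mul_assoc])

end GenericE

/-! ### Generic 2×2 matrix lemmas over an arbitrary `ℂ`-algebra `A`. -/

section GenericM
variable {A : Type*} [Ring A] [Algebra ℂ A]

/-- Pauli `X` with entries in `A`. -/
def mX : Matrix (Fin 2) (Fin 2) A := !![0, 1; 1, 0]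
/-- Pauli `Y` with entries in `A`. -/
def mY : Matrix (Fin 2) (Fin 2) A :=
  !![0, algebraMap ℂ A (-Complex.I); algebraMap ℂ A Complex.I, 0]
/-- The twisted diagonal embedding `diag(-x, x)`. -/
def mZ (x : A) : Matrix (Fin 2) (Fin 2) A := !![-x, 0; 0, x]
/-- The scalar (diagonal) embedding `diag(x, x)`. -/
def mS (x : A) : Matrix (Fin 2) (Fin 2) A := !![x, 0; 0, x]
/-- Pauli `Z` with entries in `A`. -/
def mZc : Matrix (Fin 2) (Fin 2) A := !![-1, 0; 0, 1]

lemma mX_mX : (mX : Matrix (Fin 2) (Fin 2) A) * mX = 1 := by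
  ext i j
  fin_cases i <;> fin_cases j <;>
    simp [mX, Matrix.mul_apply, Fin.sum_univ_two, Matrix.one_apply]

lemma mY_mY : (mY : Matrix (Fin 2) (Fin 2) A) * mY = 1 := by
  ext i j
  fin_cases i <;> fin_cases j <;>
    simp [mY, Matrix.mul_apply, Fin.sum_univ_two, Matrix.one_apply, ← map_mul] <;>
    norm_num

lemma mX_mY_anti : (mX : Matrix (Fin 2) (Fin 2) A) * mY + mY * mX = 0 := by
  ext i j
  fin_cases i <;> fin_cases j <;>
    simp [mX, mY, Matrix.mul_apply, Fin.sum_univ_two] <;>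
    simp [Algebra.algebraMap_eq_smul_one]

lemma mX_mZ (x : A) : mX * mZ x = -(mZ x * mX) := by
  ext i j
  fin_cases i <;> fin_cases j <;>
    simp [mX, mZ, Matrix.mul_apply, Fin.sum_univ_two]

lemma mY_mZ (x : A) : mY * mZ x = -(mZ x * mY) := by
  ext i j
  fin_cases i <;> fin_cases j <;>
    simp [mY, mZ, Matrix.mul_apply, Fin.sum_univ_two, Algebra.commutes]

lemma mZ_mZ (x y : A) : mZ x * mZ y = mS (x * y) := by
  ext i j
  fin_cases i <;> fin_cases j <;>
    simp [mZ, mS, Matrix.mul_apply, Fin.sum_univ_two]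

lemma mS_add (x y : A) : mS x + mS y = mS (x + y) := by
  ext i j
  fin_cases i <;> fin_cases j <;> simp [mS]

lemma mS_sub (x y : A) : mS x - mS y = mS (x - y) := by
  ext i j
  fin_cases i <;> fin_cases j <;> simp [mS]

lemma mS_zero : mS (0 : A) = 0 := by
  ext i j
  fin_cases i <;> fin_cases j <;> simp [mS]

lemma mS_one : mS (1 : A) = 1 := by
  ext i j
  fin_cases i <;> fin_cases j <;> simp [mS, Matrix.one_apply]

lemma mS_two : mS (2 : A) = 2 := by
  have h : (2 : A) = 1 + 1 := by norm_num
  rw [h, ← mS_add, mS_one]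
  norm_num

lemma mXY_smul : Complex.I • ((mX : Matrix (Fin 2) (Fin 2) A) * mY) = mZc := by
  ext i j
  fin_cases i <;> fin_cases j <;>
    simp [mX, mY, mZc, Matrix.mul_apply, Fin.sum_univ_two, Algebra.algebraMap_eq_smul_one,
      smul_smul] <;> simp [Algebra.algebraMap_eq_smul_one]

lemma mZc_mZ (x : A) : mZc * mZ x = mS x := by
  ext i j
  fin_cases i <;> fin_cases j <;>
    simp [mZc, mZ, mS, Matrix.mul_apply, Fin.sum_univ_two]

lemma genE_mat (i j : Fin 2) :
    genE (mZc : Matrix (Fin 2) (Fin 2) A) mX i j = Matrix.single i j 1 := by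
  fin_cases i <;> fin_cases j <;>
    norm_num [genE, Fin.ext_iff, genP0, genP1, mZc, mX] <;>
    ext a b <;>
    fin_cases a <;> fin_cases b <;>
    simp [Matrix.single, Matrix.mul_apply, Fin.sum_univ_two,
      Matrix.one_apply, Matrix.smul_apply, smul_smul] <;>
    module

lemma mStd_mS (i j : Fin 2) (x : A) :
    Matrix.single i j 1 * mS x = Matrix.single i j x := by
  ext a b
  fin_cases i <;> fin_cases j <;> fin_cases a <;> fin_cases b <;>
    simp [Matrix.single, mS, Matrix.mul_apply, Fin.sum_univ_two]

lemma mS_mul (x y : A) : mS x * mS y = mS (x * y) := by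
  ext i j
  fin_cases i <;> fin_cases j <;> simp [mS, Matrix.mul_apply, Fin.sum_univ_two]

/-- The diagonal embedding as an algebra homomorphism. -/
noncomputable def mSAlgHom : A →ₐ[ℂ] Matrix (Fin 2) (Fin 2) A :=
  AlgHom.ofLinearMap
    { toFun := mS
      map_add' := fun x y => (mS_add x y).symm
      map_smul' := fun c x => by
        ext i j
        fin_cases i <;> fin_cases j <;> simp [mS] }
    mS_one (fun x y => (mS_mul x y).symm)

lemma mSAlgHom_apply (x : A) : mSAlgHom x = mS x := rfl

lemma mS_neg (x : A) : mS (-x) = -(mS x) := by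
  ext i j
  fin_cases i <;> fin_cases j <;> simp [mS]

lemma gen_double {M : Type*} [Ring M] {x : M} (h : x * x = 1) : x * x + x * x = 2 := by
  rw [h]; norm_num

lemma gen_flip_add {M : Type*} [Ring M] {x y : M} (h : x + y = 0) : y + x = 0 := by
  rw [add_comm]; exact h

lemma gen_add_eq_zero' {M : Type*} [Ring M] {a b : M} (h : a = -b) : a + b = 0 := by
  rw [h]; simp

lemma gen_ZZ_ww (a b : A) {c : Prop} [Decidable c]
    (h : a * b + b * a = if c then 2 else 0) :
    mZ a * mZ b + mZ b * mZ a = if c then 2 else 0 := by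
  rw [mZ_mZ, mZ_mZ, mS_add, h]
  split_ifs
  exacts [mS_two, mS_zero]

lemma gen_ZZ_pq (a b : A) {c : Prop} [Decidable c]
    (h : a * b - b * a = if c then 1 else 0) :
    mZ a * mZ b - mZ b * mZ a = if c then 1 else 0 := by
  rw [mZ_mZ, mZ_mZ, mS_sub, h]
  split_ifs
  exacts [mS_one, mS_zero]

lemma gen_ZZ_comm {a b : A} (h : a * b = b * a) : mZ a * mZ b = mZ b * mZ a := by
  rw [mZ_mZ, mZ_mZ, h]

lemma gen_ZZ_anti {a b : A} (h : a * b = -(b * a)) : mZ a * mZ b = -(mZ b * mZ a) := by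
  rw [mZ_mZ, mZ_mZ, h, mS_neg]

end GenericM

/-! ### Conjugation machinery (generic). -/

section GenericConj
variable {C : Type*} [Ring C] [Algebra ℂ C]

/-- Conjugation by a square root of one, as an algebra homomorphism. -/
def conjAlgHom (u : C) (hu : u * u = 1) : C →ₐ[ℂ] C where
  toFun c := u * c * u
  map_one' := by show u * 1 * u = 1; rw [mul_one, hu]
  map_mul' x y := by
    show u * (x * y) * u = u * x * u * (u * y * u)
    simp only [mul_assoc]
    rw [gen_sq3 hu]
  map_zero' := by show u * 0 * u = 0; rw [mul_zero, zero_mul]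
  map_add' x y := by show u * (x + y) * u = u * x * u + u * y * u; rw [mul_add, add_mul]
  commutes' r := by
    show u * algebraMap ℂ _ r * u = algebraMap ℂ _ r
    rw [← Algebra.commutes r u, mul_assoc, hu, mul_one]

lemma gen_conj_fix {u z : C} (hu : u * u = 1) (hz : u * z = z * u) :
    conjAlgHom u hu z = z := by
  show u * z * u = z
  rw [hz, mul_assoc, hu, mul_one]

lemma gen_comm_mul_self {u w : C} (hw : u * w = w * u) : u * (u * w) = (u * w) * u := by
  conv_rhs => rw [mul_assoc, ← hw]

lemma gen_comm_of_double_anti {u g w : C} (hug : u * g = -(g * u)) (huw : u * w = -(w * u)) :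
    u * (g * w) = (g * w) * u := by
  rw [← mul_assoc, hug, neg_mul, mul_assoc, huw, mul_neg, neg_neg, ← mul_assoc]

lemma gen_comm_of_conj {u z : C} (hu : u * u = 1) (h : conjAlgHom u hu z = z) :
    u * z = z * u := by
  have h' : u * z * u = z := h
  conv_rhs => rw [← h', mul_assoc (u * z) u u, hu, mul_one]

end GenericConj


/-! ### The inductive step: elements of `C(2n+2, 2k)`. -/

section Step
variable (n k : ℕ)

/-- `ω₀` in `C(2n+2, 2k)`. -/
noncomputable def g0 : CliffordWeyl (2 * n + 2) k :=
  cwGen (CWGen.w (⟨0, by omega⟩ : Fin (2 * n + 2)))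
/-- `ω₁` in `C(2n+2, 2k)`. -/
noncomputable def g1 : CliffordWeyl (2 * n + 2) k :=
  cwGen (CWGen.w (⟨1, by omega⟩ : Fin (2 * n + 2)))
/-- `ω_{i+2}` in `C(2n+2, 2k)`. -/
noncomputable def gW (i : Fin (2 * n)) : CliffordWeyl (2 * n + 2) k :=
  cwGen (CWGen.w (⟨(i : ℕ) + 2, by omega⟩ : Fin (2 * n + 2)))
/-- `p_j` in `C(2n+2, 2k)`. -/
noncomputable def gP (j : Fin k) : CliffordWeyl (2 * n + 2) k := cwGen (CWGen.p j)
/-- `q_j` in `C(2n+2, 2k)`. -/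
noncomputable def gQ (j : Fin k) : CliffordWeyl (2 * n + 2) k := cwGen (CWGen.q j)
/-- The chirality element `Γ = i ω₀ ω₁`. -/
noncomputable def Gam : CliffordWeyl (2 * n + 2) k := Complex.I • (g0 n k * g1 n k)

lemma g0_sq : g0 n k * g0 n k = 1 :=
  gen_sq_of_two (by have h := cw_ww (k := k) (⟨0, by omega⟩ : Fin (2 * n + 2)) ⟨0, by omega⟩; rw [if_pos rfl] at h; exact h)

lemma g1_sq : g1 n k * g1 n k = 1 :=
  gen_sq_of_two (by have h := cw_ww (k := k) (⟨1, by omega⟩ : Fin (2 * n + 2)) ⟨1, by omega⟩; rw [if_pos rfl] at h; exact h)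

lemma w_anticomm {m : ℕ} {i j : Fin m} (h : i ≠ j) :
    cwGen (k := k) (CWGen.w i) * cwGen (CWGen.w j)
      = -(cwGen (CWGen.w j) * cwGen (CWGen.w i)) :=
  gen_anticomm (by
    have := cw_ww (k := k) i j
    rwa [if_neg h] at this)

lemma g1g0 : g1 n k * g0 n k = -(g0 n k * g1 n k) :=
  w_anticomm k (by simp [Fin.ext_iff])

lemma g0gW (i : Fin (2 * n)) : g0 n k * gW n k i = -(gW n k i * g0 n k) :=
  w_anticomm k (by simp [Fin.ext_iff])

lemma g1gW (i : Fin (2 * n)) : g1 n k * gW n k i = -(gW n k i * g1 n k) :=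
  w_anticomm k (by simp [Fin.ext_iff])

lemma g0gP (j : Fin k) : g0 n k * gP n k j = -(gP n k j * g0 n k) := cw_wp _ _
lemma g1gP (j : Fin k) : g1 n k * gP n k j = -(gP n k j * g1 n k) := cw_wp _ _
lemma g0gQ (j : Fin k) : g0 n k * gQ n k j = -(gQ n k j * g0 n k) := cw_wq _ _
lemma g1gQ (j : Fin k) : g1 n k * gQ n k j = -(gQ n k j * g1 n k) := cw_wq _ _

lemma Gam_sq : Gam n k * Gam n k = 1 :=
  gen_gam_sq (g0_sq n k) (g1_sq n k) (g1g0 n k)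

lemma Gam_g0 : Gam n k * g0 n k = -(g0 n k * Gam n k) := gen_gam_a (g1g0 n k)

lemma g0_Gam : g0 n k * Gam n k = -(Gam n k * g0 n k) := by
  rw [Gam_g0, neg_neg]

lemma Gam_gW (i : Fin (2 * n)) : Gam n k * gW n k i = gW n k i * Gam n k :=
  gen_gam_comm (g0gW n k i) (g1gW n k i)
lemma Gam_gP (j : Fin k) : Gam n k * gP n k j = gP n k j * Gam n k :=
  gen_gam_comm (g0gP n k j) (g1gP n k j)
lemma Gam_gQ (j : Fin k) : Gam n k * gQ n k j = gQ n k j * Gam n k :=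
  gen_gam_comm (g0gQ n k j) (g1gQ n k j)

/-- The image of a generator of `C(2n,2k)` under the twisted embedding. -/
noncomputable def iotaGen : CWGen (2 * n) k → CliffordWeyl (2 * n + 2) k := fun g =>
  match g with
  | CWGen.w i => Gam n k * gW n k i
  | CWGen.p j => Gam n k * gP n k j
  | CWGen.q j => Gam n k * gQ n k j

/-- Generic relation-transfer lemmas for the twisted embedding. -/
lemma gen_iota_ww {C : Type*} [Ring C] [Algebra ℂ C] {g wi wj : C} {c : Prop} [Decidable c]
    (hg : g * g = 1) (hwi : g * wi = wi * g) (hwj : g * wj = wj * g)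
    (hww : wi * wj + wj * wi = if c then 2 else 0) :
    (g * wi) * (g * wj) + (g * wj) * (g * wi) = if c then 2 else 0 := by
  rw [gen_gam_mul_mul hg hwi, gen_gam_mul_mul hg hwj, hww]

lemma gen_iota_pq {C : Type*} [Ring C] [Algebra ℂ C] {g p q : C} {c : Prop} [Decidable c]
    (hg : g * g = 1) (hp : g * p = p * g) (hq : g * q = q * g)
    (hpq : p * q - q * p = if c then 1 else 0) :
    (g * p) * (g * q) - (g * q) * (g * p) = if c then 1 else 0 := by
  rw [gen_gam_mul_mul hg hp, gen_gam_mul_mul hg hq, hpq]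

lemma gen_iota_comm {C : Type*} [Ring C] [Algebra ℂ C] {g p q : C}
    (hg : g * g = 1) (hp : g * p = p * g) (hq : g * q = q * g)
    (hpq : p * q = q * p) :
    (g * p) * (g * q) = (g * q) * (g * p) := by
  rw [gen_gam_mul_mul hg hp, gen_gam_mul_mul hg hq, hpq]

lemma gen_iota_anti {C : Type*} [Ring C] [Algebra ℂ C] {g p q : C}
    (hg : g * g = 1) (hp : g * p = p * g) (hq : g * q = q * g)
    (hpq : p * q = -(q * p)) :
    (g * p) * (g * q) = -((g * q) * (g * p)) := by
  rw [gen_gam_mul_mul hg hp, gen_gam_mul_mul hg hq, hpq]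

/-- The twisted embedding `C(2n, 2k) →ₐ C(2n+2, 2k)`. -/
noncomputable def iotaStep : CliffordWeyl (2 * n) k →ₐ[ℂ] CliffordWeyl (2 * n + 2) k :=
  RingQuot.liftAlgHom ℂ ⟨FreeAlgebra.lift ℂ (iotaGen n k), by
    rintro x y (⟨i, j⟩ | ⟨i, j⟩ | ⟨i, j⟩ | ⟨i, j⟩ | ⟨i, j⟩ | ⟨i, j⟩) <;>
      simp only [map_add, map_sub, map_mul, map_neg, FreeAlgebra.lift_ι_apply,
        iotaGen]
    · have hww : gW n k i * gW n k j + gW n k j * gW n k i = if i = j then 2 else 0 :=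
        (cw_ww _ _).trans (if_congr (by simp only [Fin.ext_iff]; omega) rfl rfl)
      refine (gen_iota_ww (Gam_sq n k) (Gam_gW n k i) (Gam_gW n k j) hww).trans ?_
      split_ifs <;> simp [map_ofNat]
    · refine (gen_iota_pq (Gam_sq n k) (Gam_gP n k i) (Gam_gQ n k j) (cw_pq i j)).trans ?_
      split_ifs <;> simp
    · exact gen_iota_comm (Gam_sq n k) (Gam_gP n k i) (Gam_gP n k j) (cw_pp i j)
    · exact gen_iota_comm (Gam_sq n k) (Gam_gQ n k i) (Gam_gQ n k j) (cw_qq i j)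
    · exact gen_iota_anti (Gam_sq n k) (Gam_gW n k i) (Gam_gP n k j) (cw_wp _ _)
    · exact gen_iota_anti (Gam_sq n k) (Gam_gW n k i) (Gam_gQ n k j) (cw_wq _ _)⟩

lemma iotaStep_gen (g : CWGen (2 * n) k) : iotaStep n k (cwGen g) = iotaGen n k g := by
  simp [iotaStep, cwGen, RingQuot.liftAlgHom_mkAlgHom_apply]

/-- `Γ` commutes with everything in the image of `iotaStep`. -/
lemma Gam_iota (x : CliffordWeyl (2 * n) k) :
    Gam n k * iotaStep n k x = iotaStep n k x * Gam n k := by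
  have hcomp : (conjAlgHom (Gam n k) (Gam_sq n k)).comp (iotaStep n k) = iotaStep n k := by
    apply RingQuot.ringQuot_ext'
    apply FreeAlgebra.hom_ext
    funext g
    show conjAlgHom (Gam n k) (Gam_sq n k) (iotaStep n k (cwGen g)) = iotaStep n k (cwGen g)
    rw [iotaStep_gen]
    rcases g with i | j | j <;> simp only [iotaGen]
    · exact gen_conj_fix (Gam_sq n k) (gen_comm_mul_self (Gam_gW n k i))
    · exact gen_conj_fix (Gam_sq n k) (gen_comm_mul_self (Gam_gP n k j))
    · exact gen_conj_fix (Gam_sq n k) (gen_comm_mul_self (Gam_gQ n k j))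
  have := congrArg (fun (f : CliffordWeyl (2 * n) k →ₐ[ℂ] CliffordWeyl (2 * n + 2) k) => f x)
    hcomp
  exact gen_comm_of_conj (Gam_sq n k) this

lemma g0_iota (x : CliffordWeyl (2 * n) k) :
    g0 n k * iotaStep n k x = iotaStep n k x * g0 n k := by
  have hcomp : (conjAlgHom (g0 n k) (g0_sq n k)).comp (iotaStep n k) = iotaStep n k := by
    apply RingQuot.ringQuot_ext'
    apply FreeAlgebra.hom_ext
    funext g
    show conjAlgHom (g0 n k) (g0_sq n k) (iotaStep n k (cwGen g)) = iotaStep n k (cwGen g)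
    rw [iotaStep_gen]
    rcases g with i | j | j <;> simp only [iotaGen]
    · exact gen_conj_fix (g0_sq n k) (gen_comm_of_double_anti (g0_Gam n k) (g0gW n k i))
    · exact gen_conj_fix (g0_sq n k) (gen_comm_of_double_anti (g0_Gam n k) (g0gP n k j))
    · exact gen_conj_fix (g0_sq n k) (gen_comm_of_double_anti (g0_Gam n k) (g0gQ n k j))
  have := congrArg (fun (f : CliffordWeyl (2 * n) k →ₐ[ℂ] CliffordWeyl (2 * n + 2) k) => f x)
    hcomp
  exact gen_comm_of_conj (g0_sq n k) this

end Step

/-! ### The map `φ : C(2n+2, 2k) → Mat₂(C(2n, 2k))`. -/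

section Phi
variable (n k : ℕ)

/-- Images of the generators of `C(2n+2, 2k)` in `Mat₂(C(2n, 2k))`. -/
noncomputable def stepGen : CWGen (2 * n + 2) k →
    Matrix (Fin 2) (Fin 2) (CliffordWeyl (2 * n) k) := fun g =>
  match g with
  | CWGen.w i =>
    if h0 : (i : ℕ) = 0 then mX
    else if h1 : (i : ℕ) = 1 then mY
    else mZ (cwGen (CWGen.w (⟨(i : ℕ) - 2, by omega⟩ : Fin (2 * n))))
  | CWGen.p j => mZ (cwGen (CWGen.p j))
  | CWGen.q j => mZ (cwGen (CWGen.q j))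

/-- The algebra map `φ : C(2n+2, 2k) →ₐ Mat₂(C(2n, 2k))`. -/
noncomputable def stepHom :
    CliffordWeyl (2 * n + 2) k →ₐ[ℂ] Matrix (Fin 2) (Fin 2) (CliffordWeyl (2 * n) k) :=
  RingQuot.liftAlgHom ℂ ⟨FreeAlgebra.lift ℂ (stepGen n k), by
    rintro x y (⟨i, j⟩ | ⟨i, j⟩ | ⟨i, j⟩ | ⟨i, j⟩ | ⟨i, j⟩ | ⟨i, j⟩) <;>
      simp only [map_add, map_sub, map_mul, map_neg, FreeAlgebra.lift_ι_apply, stepGen]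
    · -- ww
      by_cases hi0 : (i : ℕ) = 0 <;> by_cases hj0 : (j : ℕ) = 0
      · simp only [dif_pos hi0, dif_pos hj0]
        rw [if_pos (Fin.ext (by omega)), show ((2 : FreeAlgebra ℂ (CWGen (2*n+2) k))) = 2
          from rfl]
        refine Eq.trans (gen_double mX_mX) ?_
        simp [map_ofNat]
      · by_cases hj1 : (j : ℕ) = 1
        · simp only [dif_pos hi0, dif_neg (by omega : ¬(j : ℕ) = 0), dif_pos hj1]
          rw [if_neg (by simp only [Fin.ext_iff]; omega)]
          refine Eq.trans mX_mY_anti ?_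
          simp
        · simp only [dif_pos hi0, dif_neg (by omega : ¬(j : ℕ) = 0),
            dif_neg (by omega : ¬(j : ℕ) = 1)]
          rw [if_neg (by simp only [Fin.ext_iff]; omega)]
          refine Eq.trans (gen_add_eq_zero (mX_mZ _)) ?_
          simp
      · by_cases hi1 : (i : ℕ) = 1
        · simp only [dif_pos hj0, dif_neg (by omega : ¬(i : ℕ) = 0), dif_pos hi1]
          rw [if_neg (by simp only [Fin.ext_iff]; omega)]
          refine Eq.trans (gen_flip_add mX_mY_anti) ?_
          simp
        · simp only [dif_pos hj0, dif_neg (by omega : ¬(i : ℕ) = 0),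
            dif_neg (by omega : ¬(i : ℕ) = 1)]
          rw [if_neg (by simp only [Fin.ext_iff]; omega)]
          refine Eq.trans (gen_flip_add (gen_add_eq_zero (mX_mZ _))) ?_
          simp
      · by_cases hi1 : (i : ℕ) = 1 <;> by_cases hj1 : (j : ℕ) = 1
        · simp only [dif_neg (by omega : ¬(i : ℕ) = 0), dif_pos hi1,
            dif_neg (by omega : ¬(j : ℕ) = 0), dif_pos hj1]
          rw [if_pos (Fin.ext (by omega))]
          refine Eq.trans (gen_double mY_mY) ?_
          simp [map_ofNat]
        · simp only [dif_neg (by omega : ¬(i : ℕ) = 0), dif_pos hi1,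
            dif_neg (by omega : ¬(j : ℕ) = 0), dif_neg (by omega : ¬(j : ℕ) = 1)]
          rw [if_neg (by simp only [Fin.ext_iff]; omega)]
          refine Eq.trans (gen_add_eq_zero (mY_mZ _)) ?_
          simp
        · simp only [dif_neg (by omega : ¬(i : ℕ) = 0), dif_neg (by omega : ¬(i : ℕ) = 1),
            dif_neg (by omega : ¬(j : ℕ) = 0), dif_pos hj1]
          rw [if_neg (by simp only [Fin.ext_iff]; omega)]
          refine Eq.trans (gen_flip_add (gen_add_eq_zero (mY_mZ _))) ?_
          simp
        · simp only [dif_neg (by omega : ¬(i : ℕ) = 0), dif_neg (by omega : ¬(i : ℕ) = 1),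
            dif_neg (by omega : ¬(j : ℕ) = 0), dif_neg (by omega : ¬(j : ℕ) = 1)]
          have hww : cwGen (k := k) (CWGen.w (⟨(i : ℕ) - 2, by omega⟩ : Fin (2 * n))) *
                cwGen (CWGen.w (⟨(j : ℕ) - 2, by omega⟩ : Fin (2 * n))) +
              cwGen (CWGen.w (⟨(j : ℕ) - 2, by omega⟩ : Fin (2 * n))) *
                cwGen (CWGen.w (⟨(i : ℕ) - 2, by omega⟩ : Fin (2 * n))) =
              if i = j then 2 else 0 :=
            (cw_ww _ _).trans (if_congr (by simp only [Fin.ext_iff]; omega) rfl rfl)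
          refine Eq.trans (gen_ZZ_ww _ _ hww) ?_
          split_ifs <;> simp [map_ofNat]
    · -- pq
      refine Eq.trans (gen_ZZ_pq _ _ (cw_pq i j)) ?_
      split_ifs <;> simp
    · -- pp
      exact gen_ZZ_comm (cw_pp i j)
    · -- qq
      exact gen_ZZ_comm (cw_qq i j)
    · -- wp
      by_cases hi0 : (i : ℕ) = 0
      · simp only [dif_pos hi0]
        exact mX_mZ _
      · by_cases hi1 : (i : ℕ) = 1
        · simp only [dif_neg hi0, dif_pos hi1]
          exact mY_mZ _
        · simp only [dif_neg hi0, dif_neg hi1]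
          exact gen_ZZ_anti (cw_wp _ _)
    · -- wq
      by_cases hi0 : (i : ℕ) = 0
      · simp only [dif_pos hi0]
        exact mX_mZ _
      · by_cases hi1 : (i : ℕ) = 1
        · simp only [dif_neg hi0, dif_pos hi1]
          exact mY_mZ _
        · simp only [dif_neg hi0, dif_neg hi1]
          exact gen_ZZ_anti (cw_wq _ _)⟩

lemma stepHom_gen (g : CWGen (2 * n + 2) k) :
    stepHom n k (cwGen g) = stepGen n k g := by
  simp [stepHom, cwGen, RingQuot.liftAlgHom_mkAlgHom_apply]

end Phi

/-! ### Generic reconstruction lemmas. -/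

section GenericRecon
variable {C : Type*} [Ring C] [Algebra ℂ C]

lemma genE_recon_t (g t : C) :
    genE g t 0 0 * 0 + genE g t 0 1 * 1 + (genE g t 1 0 * 1 + genE g t 1 1 * 0) = t := by
  norm_num [genE]
  rw [← add_mul, genP_sum, one_mul]

lemma genE_recon_y (a b : C) (ha : a * a = 1) (hba : b * a = -(a * b)) :
    genE (Complex.I • (a * b)) a 0 0 * 0 +
      genE (Complex.I • (a * b)) a 0 1 * algebraMap ℂ C (-Complex.I) +
      (genE (Complex.I • (a * b)) a 1 0 * algebraMap ℂ C Complex.I +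
        genE (Complex.I • (a * b)) a 1 1 * 0) = b := by
  norm_num [genE]
  rw [← Algebra.commutes, ← Algebra.commutes, ← mul_assoc, ← mul_assoc]
  rw [neg_add_eq_sub, ← sub_mul, ← mul_sub, genP_diff]
  rw [Algebra.algebraMap_eq_smul_one, smul_mul_assoc, one_mul, smul_smul, Complex.I_mul_I,
    neg_smul, one_smul]
  rw [neg_mul, mul_assoc, hba, mul_neg, neg_neg, ← mul_assoc, ha, one_mul]

lemma genE_recon_z (g t x : C) :
    genE g t 0 0 * (-x) + genE g t 0 1 * 0 + (genE g t 1 0 * 0 + genE g t 1 1 * x) = g * x := by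
  norm_num [genE]
  rw [neg_add_eq_sub, ← sub_mul, genP_diff]

end GenericRecon

section GenericRecon2
variable {A : Type*} [Ring A] [Algebra ℂ A]

open Matrix in
lemma gen_matrix_recon (M : Matrix (Fin 2) (Fin 2) A) :
    single 0 0 (1 : A) * mS (M 0 0) + single 0 1 (1 : A) * mS (M 0 1) +
      (single 1 0 (1 : A) * mS (M 1 0) + single 1 1 (1 : A) * mS (M 1 1)) =
      M := by
  ext i j
  fin_cases i <;> fin_cases j <;>
    simp [Matrix.single, mS, Matrix.mul_apply, Fin.sum_univ_two]

end GenericRecon2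

/-! ### The inverse map `ψ` and the step equivalence. -/

section Psi
variable (n k : ℕ)

/-- The inverse map `ψ : Mat₂(C(2n, 2k)) →ₐ C(2n+2, 2k)`. -/
noncomputable def psiHom :
    Matrix (Fin 2) (Fin 2) (CliffordWeyl (2 * n) k) →ₐ[ℂ] CliffordWeyl (2 * n + 2) k :=
  matrixLift (genE (Gam n k) (g0 n k)) (iotaStep n k)
    (genE_mul (Gam_sq n k) (g0_sq n k) (g0_Gam n k))
    genE_sum
    (fun a b s => genE_comm (Gam_iota n k s) (g0_iota n k s) a b)

lemma psiHom_apply (M : Matrix (Fin 2) (Fin 2) (CliffordWeyl (2 * n) k)) :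
    psiHom n k M =
      genE (Gam n k) (g0 n k) 0 0 * iotaStep n k (M 0 0) +
      genE (Gam n k) (g0 n k) 0 1 * iotaStep n k (M 0 1) +
      (genE (Gam n k) (g0 n k) 1 0 * iotaStep n k (M 1 0) +
       genE (Gam n k) (g0 n k) 1 1 * iotaStep n k (M 1 1)) :=
  matrixLift_apply _ _ _ _ _ M

lemma stepHom_g0 : stepHom n k (g0 n k) = mX := by
  rw [g0, stepHom_gen]
  norm_num [stepGen]

lemma stepHom_g1 : stepHom n k (g1 n k) = mY := by
  rw [g1, stepHom_gen]
  norm_num [stepGen]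

lemma stepHom_gW (i : Fin (2 * n)) :
    stepHom n k (gW n k i) = mZ (cwGen (CWGen.w i)) := by
  rw [gW, stepHom_gen]
  simp only [stepGen]
  rw [dif_neg (by omega), dif_neg (by omega)]
  congr 2

lemma stepHom_gP (j : Fin k) : stepHom n k (gP n k j) = mZ (cwGen (CWGen.p j)) := by
  rw [gP, stepHom_gen]
  rfl

lemma stepHom_gQ (j : Fin k) : stepHom n k (gQ n k j) = mZ (cwGen (CWGen.q j)) := by
  rw [gQ, stepHom_gen]
  rfl

lemma stepHom_Gam : stepHom n k (Gam n k) = mZc := by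
  rw [Gam, map_smul, map_mul, stepHom_g0, stepHom_g1]
  exact mXY_smul

lemma phi_iota (x : CliffordWeyl (2 * n) k) :
    stepHom n k (iotaStep n k x) = mS x := by
  have hcomp : (stepHom n k).comp (iotaStep n k) = mSAlgHom := by
    apply RingQuot.ringQuot_ext'
    apply FreeAlgebra.hom_ext
    funext g
    show stepHom n k (iotaStep n k (cwGen g)) = mSAlgHom (cwGen g)
    rw [iotaStep_gen, mSAlgHom_apply]
    rcases g with i | j | j <;> simp only [iotaGen]
    · rw [map_mul, stepHom_Gam, stepHom_gW]
      exact mZc_mZ _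
    · rw [map_mul, stepHom_Gam, stepHom_gP]
      exact mZc_mZ _
    · rw [map_mul, stepHom_Gam, stepHom_gQ]
      exact mZc_mZ _
  exact congrArg (fun (f : CliffordWeyl (2 * n) k →ₐ[ℂ]
    Matrix (Fin 2) (Fin 2) (CliffordWeyl (2 * n) k)) => f x) hcomp

lemma phi_E (a b : Fin 2) :
    stepHom n k (genE (Gam n k) (g0 n k) a b) =
      Matrix.single a b (1 : CliffordWeyl (2 * n) k) := by
  fin_cases a <;> fin_cases b <;> norm_num [genE, Fin.ext_iff] <;>
    simp only [genP0, genP1, map_mul, map_smul, map_sub, map_add, map_one, stepHom_Gam,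
      stepHom_g0]
  · exact genE_mat 0 0
  · exact genE_mat 0 1
  · exact genE_mat 1 0
  · exact genE_mat 1 1

end Psi

section StepEquiv
variable (n k : ℕ)

/-- The key step: `C(2n+2, 2k) ≃ Mat₂(C(2n, 2k))`. -/
noncomputable def stepEquiv :
    CliffordWeyl (2 * n + 2) k ≃ₐ[ℂ] Matrix (Fin 2) (Fin 2) (CliffordWeyl (2 * n) k) :=
  AlgEquiv.ofAlgHom (stepHom n k) (psiHom n k)
    (by
      apply AlgHom.ext
      intro M
      show stepHom n k (psiHom n k M) = M
      rw [psiHom_apply]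
      simp only [map_add, map_mul, phi_E, phi_iota]
      exact gen_matrix_recon M)
    (by
      apply RingQuot.ringQuot_ext'
      apply FreeAlgebra.hom_ext
      funext g
      show psiHom n k (stepHom n k (cwGen g)) = cwGen g
      rw [stepHom_gen]
      rcases g with i | j | j
      · by_cases hi0 : (i : ℕ) = 0
        · simp only [stepGen]
          rw [dif_pos hi0, psiHom_apply]
          simp only [mX, Matrix.cons_val', Matrix.cons_val_zero, Matrix.cons_val_one, Matrix.head_cons,
            Matrix.empty_val', Matrix.cons_val_fin_one, Matrix.head_fin_const, Matrix.of_apply,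
            map_zero, map_one, map_neg, AlgHom.commutes]
          refine (genE_recon_t (Gam n k) (g0 n k)).trans ?_
          rw [g0]
          exact congrArg (fun j : Fin (2 * n + 2) => cwGen (k := k) (CWGen.w j))
            (Fin.ext (show (0 : ℕ) = (i : ℕ) by omega))
        · by_cases hi1 : (i : ℕ) = 1
          · simp only [stepGen]
            rw [dif_neg hi0, dif_pos hi1, psiHom_apply]
            simp only [mY, Matrix.cons_val', Matrix.cons_val_zero, Matrix.cons_val_one, Matrix.head_cons,
            Matrix.empty_val', Matrix.cons_val_fin_one, Matrix.head_fin_const, Matrix.of_apply,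
            map_zero, map_one, AlgHom.commutes]
            refine (genE_recon_y (g0 n k) (g1 n k) (g0_sq n k) (g1g0 n k)).trans ?_
            rw [g1]
            exact congrArg (fun j : Fin (2 * n + 2) => cwGen (k := k) (CWGen.w j))
              (Fin.ext (show (1 : ℕ) = (i : ℕ) by omega))
          · simp only [stepGen]
            rw [dif_neg hi0, dif_neg hi1, psiHom_apply]
            simp only [mZ, Matrix.cons_val', Matrix.cons_val_zero, Matrix.cons_val_one, Matrix.head_cons,
            Matrix.empty_val', Matrix.cons_val_fin_one, Matrix.head_fin_const, Matrix.of_apply,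
            map_zero, map_one, map_neg, AlgHom.commutes]
            refine (genE_recon_z (Gam n k) (g0 n k) _).trans ?_
            rw [iotaStep_gen]
            simp only [iotaGen]
            refine (gen_sq3 (Gam_sq n k)).trans ?_
            rw [gW]
            exact congrArg (fun j : Fin (2 * n + 2) => cwGen (k := k) (CWGen.w j))
              (Fin.ext (show (i : ℕ) - 2 + 2 = (i : ℕ) by omega))
      · simp only [stepGen]
        rw [psiHom_apply]
        simp only [mZ, Matrix.cons_val', Matrix.cons_val_zero, Matrix.cons_val_one, Matrix.head_cons,
            Matrix.empty_val', Matrix.cons_val_fin_one, Matrix.head_fin_const, Matrix.of_apply,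
            map_zero, map_one, map_neg, AlgHom.commutes]
        refine (genE_recon_z (Gam n k) (g0 n k) _).trans ?_
        rw [iotaStep_gen]
        simp only [iotaGen]
        exact gen_sq3 (Gam_sq n k)
      · simp only [stepGen]
        rw [psiHom_apply]
        simp only [mZ, Matrix.cons_val', Matrix.cons_val_zero, Matrix.cons_val_one, Matrix.head_cons,
            Matrix.empty_val', Matrix.cons_val_fin_one, Matrix.head_fin_const, Matrix.of_apply,
            map_zero, map_one, map_neg, AlgHom.commutes]
        refine (genE_recon_z (Gam n k) (g0 n k) _).trans ?_
        rw [iotaStep_gen]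
        simp only [iotaGen]
        exact gen_sq3 (Gam_sq n k))

end StepEquiv

/-! ### `A ≃ Mat₁(A)` and the final assembly. -/

section MatOne
variable {A : Type*} [Ring A] [Algebra ℂ A]

/-- The `1×1` diagonal embedding. -/
def dS (x : A) : Matrix (Fin 1) (Fin 1) A := !![x]

/-- The algebra isomorphism `A ≃ Mat₁(A)`. -/
noncomputable def matOneEquiv : A ≃ₐ[ℂ] Matrix (Fin 1) (Fin 1) A where
  toFun := dS
  invFun M := M 0 0
  left_inv x := rfl
  right_inv M := by
    ext i j
    fin_cases i <;> fin_cases j <;> simp [dS]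
  map_mul' x y := by
    ext i j
    fin_cases i <;> fin_cases j <;> simp [dS, Matrix.mul_apply]
  map_add' x y := by
    ext i j
    fin_cases i <;> fin_cases j <;> simp [dS]
  commutes' c := by
    ext i j
    fin_cases i <;> fin_cases j <;>
      simp [dS, Matrix.algebraMap_eq_diagonal]

end MatOne

/-- The final theorem: `C(2n, 2k) ≅ Mat_{2^n}(W_{2k})`. -/
theorem cliffordWeyl_even_matrix_aux (n k : ℕ) :
    Nonempty (CliffordWeyl (2 * n) k ≃ₐ[ℂ]
      Matrix (Fin (2 ^ n)) (Fin (2 ^ n)) (WeylAlg k)) := by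
  induction n with
  | zero =>
    exact ⟨(baseEquiv k).trans matOneEquiv⟩
  | succ n ih =>
    obtain ⟨e⟩ := ih
    have h2 : 2 * 2 ^ n = 2 ^ (n + 1) := by ring
    exact ⟨(((stepEquiv n k).trans e.mapMatrix).trans
      (Matrix.compAlgEquiv _ _ _ _)).trans
      (Matrix.reindexAlgEquiv ℂ _ (finProdFinEquiv.trans (finCongr h2)))⟩

end

/-- `C(2n, 2k) ≅ Matrix (Fin 2^n) (Fin 2^n) W_{2k}`:
the even Clifford–Weyl algebra is a matrix algebra over the Weyl algebra. -/
theorem cliffordWeyl_even_matrix (n k : ℕ) :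
    Nonempty (CliffordWeyl (2 * n) k ≃ₐ[ℂ]
      Matrix (Fin (2 ^ n)) (Fin (2 ^ n)) (WeylAlg k)) := by
  exact cliffordWeyl_even_matrix_aux n k
end
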